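/- arXiv:1705.03192 — 9 statements merged into one kernel-verified Lean document; each statement's English description precedes it below -/
import Mathlib

section
/- With the chain λ₀ = D, λ_{i−1} = β_i λ_i + λ_{i+1} (λ_{l+1} = 0) associated to integers K > D ≥ 1, the column intervals C₀ = [0, β₀λ₀−1] (empty if β₀ = 0), C_i = [K−D−λ_{2i−1}, K−D−λ_{2i+1}−1] for 1 ≤ i ≤ ⌈l/2⌉−1, and C_{⌈l/2⌉} = [K−D−λ_{2⌈l/2⌉−1}, K−D−1] form a partition of [0, K−D−1]. -/
/-- The pair (λ_{i-1}, λ_i) of the Euclidean chain, with λ_{-1} = K - D and λ₀ = D. -/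
def lamPair (K D : ℕ) : ℕ → ℕ × ℕ
  | 0 => (K - D, D)
  | i + 1 =>
    let p := lamPair K D i
    (p.2, if p.2 = 0 then 0 else p.1 % p.2)

/-- λ_i of the Euclidean chain. -/
def lam (K D i : ℕ) : ℕ := (lamPair K D i).2

/-- λ_{i-1} of the Euclidean chain (so `lamS K D 0 = K - D`). -/
def lamS (K D i : ℕ) : ℕ := (lamPair K D i).1

/-- β_i = λ_{i-1} / λ_i of the Euclidean chain. -/
def beta (K D i : ℕ) : ℕ := (lamPair K D i).1 / (lamPair K D i).2

lemma lam_succ (K D i : ℕ) :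
    lam K D (i + 1) = if lam K D i = 0 then 0 else lamS K D i % lam K D i := rfl

lemma lamS_succ (K D i : ℕ) : lamS K D (i + 1) = lam K D i := rfl

lemma lam_antitone (K D : ℕ) : ∀ i j : ℕ, i ≤ j → lam K D j ≤ lam K D i := by
  have step : ∀ i, lam K D (i + 1) ≤ lam K D i := by
    intro i
    rw [lam_succ]
    split
    · omega
    · exact le_of_lt (Nat.mod_lt _ (Nat.pos_of_ne_zero (by assumption)))
  intro i j h
  induction j with
  | zero => have : i = 0 := by omega
            simp [this]
  | succ n ih =>
    rcases Nat.lt_or_ge i (n + 1) with h' | h'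
    · exact le_trans (step n) (ih (by omega))
    · have : i = n + 1 := by omega
      simp [this]

lemma lam_eq_zero_of_ge (K D l : ℕ) (hl : lam K D l = 0) :
    ∀ j, l ≤ j → lam K D j = 0 := by
  intro j hj
  have := lam_antitone K D l j hj
  omega

lemma lamS_eq (K D i : ℕ) (h : lam K D i ≠ 0) :
    lamS K D i = beta K D i * lam K D i + lam K D (i + 1) := by
  rw [lam_succ, if_neg h]
  exact (Nat.div_add_mod' (lamS K D i) (lam K D i)).symm

/-- The column intervals C₀, …, C_{⌈l/2⌉} of the AIR matrix partition [0, K−D−1]. -/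
theorem stmt4 (K D l : ℕ) (hD : 0 < D) (hDK : D < K)
    (hl : lam K D (l + 1) = 0) (hmin : ∀ j ≤ l, lam K D j ≠ 0)
    (C : ℕ → Finset ℕ)
    (hC : C = fun i =>
      if i = 0 then Finset.Ico 0 (beta K D 0 * lam K D 0)
      else if i < (l + 1) / 2 then
        Finset.Ico (K - D - lam K D (2 * i - 1)) (K - D - lam K D (2 * i + 1))
      else Finset.Ico (K - D - lam K D (2 * ((l + 1) / 2) - 1)) (K - D)) :
    (∀ i ∈ Finset.range ((l + 1) / 2 + 1), ∀ j ∈ Finset.range ((l + 1) / 2 + 1), i ≠ j →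
      Disjoint (C i) (C j)) ∧
    (Finset.range ((l + 1) / 2 + 1)).biUnion C = Finset.range (K - D) := by
  set m := (l + 1) / 2 with hm
  set a : ℕ → ℕ := fun i => if i = 0 then 0 else K - D - lam K D (2 * i - 1) with ha
  -- λ₁ ≤ K - D
  have hlam0 : lam K D 0 = D := rfl
  have hlamS0 : lamS K D 0 = K - D := rfl
  have h1 : lam K D 1 ≤ K - D := by
    rw [lam_succ, hlam0, hlamS0, if_neg (by omega)]
    exact Nat.mod_le _ _
  have hlamle : ∀ j, 1 ≤ j → lam K D j ≤ K - D := fun j hj =>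
    le_trans (lam_antitone K D 1 j hj) h1
  -- a is monotone
  have astep : ∀ i, a i ≤ a (i + 1) := by
    intro i
    cases i with
    | zero => simp [ha]
    | succ n =>
      simp only [ha]
      rw [if_neg (by omega), if_neg (by omega)]
      exact Nat.sub_le_sub_left (lam_antitone K D _ _ (by omega)) _
  have amono : ∀ i j, i ≤ j → a i ≤ a j := by
    intro i j h
    induction j with
    | zero => have : i = 0 := by omega
              simp [this]
    | succ n ih =>
      rcases Nat.lt_or_ge i (n + 1) with h' | h'
      · exact le_trans (ih (by omega)) (astep n)
      · have : i = n + 1 := by omega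
        simp [this]
  -- a (m+1) = K - D
  have hzero : lam K D (2 * m + 1) = 0 :=
    lam_eq_zero_of_ge K D (l + 1) hl _ (by omega)
  have hend : a (m + 1) = K - D := by
    simp only [ha]
    rw [if_neg (by omega)]
    have : 2 * (m + 1) - 1 = 2 * m + 1 := by omega
    rw [this, hzero]
    omega
  have ha0 : a 0 = 0 := rfl
  -- C i = Ico (a i) (a (i+1)) for i ≤ m
  have hCeq : ∀ i ≤ m, C i = Finset.Ico (a i) (a (i + 1)) := by
    intro i hi
    rcases Nat.eq_zero_or_pos i with rfl | hi0
    · rw [hC]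
      simp only [if_pos rfl]
      have hD0 : lam K D 0 ≠ 0 := by rw [hlam0]; omega
      have hs := lamS_eq K D 0 hD0
      rw [hlamS0, hlam0] at hs
      have hs' : K - D = beta K D 0 * D + lam K D 1 := hs
      have h1' : a 1 = K - D - lam K D 1 := by
        simp only [ha]; rw [if_neg (by omega)]
      have hb : beta K D 0 * D = K - D - lam K D 1 := by omega
      rw [ha0, h1', hlam0, hb]
      simp
    · rw [hC]
      simp only [if_neg (by omega : ¬ i = 0)]
      rcases Nat.lt_or_ge i m with him | him
      · rw [if_pos him]
        have e1 : a i = K - D - lam K D (2 * i - 1) := by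
          simp only [ha]; rw [if_neg (by omega)]
        have e2 : a (i + 1) = K - D - lam K D (2 * i + 1) := by
          simp only [ha]; rw [if_neg (by omega)]
          have : 2 * (i + 1) - 1 = 2 * i + 1 := by omega
          rw [this]
        rw [e1, e2]
      · have : i = m := by omega
        subst this
        have em : a m = K - D - lam K D (2 * m - 1) := by
          simp only [ha]; rw [if_neg (by omega)]
        rw [if_neg (by omega), em, hend]
  constructor
  · intro i hi j hj hij
    simp only [Finset.mem_range] at hi hj
    rw [hCeq i (by omega), hCeq j (by omega)]
    rcases Nat.lt_or_ge i j with h | h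
    · have := amono (i + 1) j h
      rw [Finset.disjoint_left]
      intro x hx hx'
      simp only [Finset.mem_Ico] at hx hx'
      omega
    · have hji : j < i := by omega
      have := amono (j + 1) i hji
      rw [Finset.disjoint_left]
      intro x hx hx'
      simp only [Finset.mem_Ico] at hx hx'
      omega
  · have key : ∀ n, (Finset.range (n + 1)).biUnion
        (fun i => Finset.Ico (a i) (a (i + 1))) = Finset.Ico (a 0) (a (n + 1)) := by
      intro n
      induction n with
      | zero => simp
      | succ n ih =>
        rw [Finset.range_add_one, Finset.biUnion_insert, ih,
          Finset.union_comm, Finset.Ico_union_Ico_eq_Ico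
            (amono 0 (n + 1) (by omega)) (astep (n + 1))]
    have : (Finset.range (m + 1)).biUnion C =
        (Finset.range (m + 1)).biUnion (fun i => Finset.Ico (a i) (a (i + 1))) := by
      apply Finset.biUnion_congr rfl
      intro i hi
      exact hCeq i (by simpa using Nat.lt_succ_iff.mp (Finset.mem_range.mp hi))
    rw [this, key, ha0, hend, Finset.range_eq_Ico]
end

section
/- Let L be the (K,D) AIR matrix and let k ∈ C_i for some i ∈ [0, ⌈l/2⌉]. Write k mod (K−D−λ_{2i−1}) = cλ_{2i} + d with 0 ≤ d < λ_{2i}. Then the down-distance of the diagonal entry L(k,k) equals D + λ_{2i+1} + (β_{2i} − 1 − c)λ_{2i}. -/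
/-- Entry (j,k) of the AIR matrix of size K × n (n = K - D), as a Boolean. -/
def airEntry : ℕ → ℕ → ℕ → ℕ → Bool
  | K, n, j, k =>
    if h : n = 0 ∨ K ≤ n then decide (j = k)
    else
      if j < K - K % n then decide (j % n = k % n)
      else
        if k < n - n % (K % n) then decide (k % (K % n) = j - (K - K % n))
        else airEntry (K % n) (n % (K % n)) (j - (K - K % n)) (k - (n - n % (K % n)))
  termination_by K n _ _ => K
  decreasing_by
    push_neg at h
    exact lt_trans (Nat.mod_lt _ (Nat.pos_of_ne_zero h.1)) h.2

/-- down-distance of the diagonal entry L(k,k) of the K × n AIR matrix. -/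
noncomputable def ddown (K n k : ℕ) : ℕ :=
  sSup {t : ℕ | 0 < t ∧ k + t < K ∧ airEntry K n (k + t) k = true}

/-- up-distance of the entry L(j,k) of the K × n AIR matrix. -/
noncomputable def dup (K n j k : ℕ) : ℕ :=
  j - sSup {j' : ℕ | j' < j ∧ airEntry K n j' k = true}

/-- right-distance of the entry L(j,k) of the K × n AIR matrix. -/
noncomputable def dright (K n j k : ℕ) : ℕ :=
  sInf {t : ℕ | 0 < t ∧ k + t < n ∧ airEntry K n j (k + t) = true}


def maxRow : ℕ → ℕ → ℕ → ℕ
  | K, n, k =>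
    if h : n = 0 ∨ K ≤ n then k
    else if K % n = 0 then K - n + k % n
    else if k < n - n % (K % n) then K - K % n + k % (K % n)
    else K - K % n + maxRow (K % n) (n % (K % n)) (k - (n - n % (K % n)))
  termination_by K n _ => K
  decreasing_by
    push_neg at h
    exact lt_trans (Nat.mod_lt _ (Nat.pos_of_ne_zero h.1)) h.2

theorem maxRow_spec : ∀ K n k, 0 < n → n < K → k < n →
    k < maxRow K n k ∧ maxRow K n k < K ∧ airEntry K n (maxRow K n k) k = true ∧
    ∀ j, j < K → airEntry K n j k = true → j ≤ maxRow K n k := by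
  intro K
  induction K using Nat.strong_induction_on with
  | _ K IH =>
  intro n k hn hnK hk
  have hne : ¬ (n = 0 ∨ K ≤ n) := by omega
  by_cases hr : K % n = 0
  · -- stacked identities only
    have hdvd : n ∣ K := Nat.dvd_of_mod_eq_zero hr
    obtain ⟨t, ht⟩ : n ∣ K - n := Nat.dvd_sub hdvd dvd_rfl
    have hM : maxRow K n k = K - n + k := by
      rw [maxRow, dif_neg hne, if_pos hr, Nat.mod_eq_of_lt hk]
    have hent : ∀ j, j < K → (airEntry K n j k = true ↔ j % n = k % n) := by
      intro j hj
      rw [airEntry, dif_neg hne, if_pos (by omega)]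
      simp
    refine ⟨by omega, by omega, ?_, ?_⟩
    · rw [hM, (hent _ (by omega)).2]
      rw [ht, Nat.mul_add_mod]
    · intro j hjK hje
      have hjk : j % n = k % n := (hent _ hjK).1 hje
      have e1 : n * (j / n) + j % n = j := Nat.div_add_mod j n
      obtain ⟨A, hA⟩ : ∃ A, n * (j / n) = A := ⟨_, rfl⟩
      rw [hA] at e1
      have hAd : n ∣ A := ⟨_, hA.symm⟩
      have h7 : n ∣ K - A := Nat.dvd_sub hdvd hAd
      have h8 : n ≤ K - A := Nat.le_of_dvd (by have := Nat.mod_lt j hn; omega) h7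
      have h9 : k % n = k := Nat.mod_eq_of_lt hk
      omega
  · -- K % n > 0
    have hrpos : 0 < K % n := Nat.pos_of_ne_zero hr
    have hrn : K % n < n := Nat.mod_lt _ hn
    have hq : n * (K / n) + K % n = K := Nat.div_add_mod K n
    have hq1 : 1 ≤ K / n := (Nat.one_le_div_iff hn).mpr (le_of_lt hnK)
    have hnK' : n ≤ K - K % n := by
      have : n * 1 ≤ n * (K / n) := Nat.mul_le_mul_left n hq1
      omega
    by_cases hcol : k < n - n % (K % n)
    · -- single 1 in the bottom block
      have hM : maxRow K n k = K - K % n + k % (K % n) := by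
        rw [maxRow, dif_neg hne, if_neg hr, if_pos hcol]
      have hkr : k % (K % n) < K % n := Nat.mod_lt _ hrpos
      refine ⟨by omega, by omega, ?_, ?_⟩
      · rw [hM, airEntry, dif_neg hne, if_neg (by omega), if_pos hcol]
        simp
      · intro j hjK hje
        by_cases hj : j < K - K % n
        · omega
        · rw [airEntry, dif_neg hne, if_neg hj, if_pos hcol] at hje
          simp at hje
          omega
    · -- recursive bottom block
      have hr'pos : 0 < n % (K % n) := by
        rcases Nat.eq_zero_or_pos (n % (K % n)) with h | h
        · omega
        · exact h
      have hr'lt : n % (K % n) < K % n := Nat.mod_lt _ hrpos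
      have hr'n : n % (K % n) ≤ n := Nat.mod_le _ _
      have hkt : k - (n - n % (K % n)) < n % (K % n) := by omega
      obtain ⟨ih1, ih2, ih3, ih4⟩ :=
        IH (K % n) (by omega) (n % (K % n)) (k - (n - n % (K % n))) hr'pos hr'lt hkt
      have hM : maxRow K n k
          = K - K % n + maxRow (K % n) (n % (K % n)) (k - (n - n % (K % n))) := by
        rw [maxRow, dif_neg hne, if_neg hr, if_neg hcol]
      refine ⟨by omega, by omega, ?_, ?_⟩
      · rw [hM, airEntry, dif_neg hne, if_neg (by omega), if_neg hcol,
          Nat.add_sub_cancel_left]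
        exact ih3
      · intro j hjK hje
        by_cases hj : j < K - K % n
        · omega
        · rw [airEntry, dif_neg hne, if_neg hj, if_neg hcol] at hje
          have := ih4 (j - (K - K % n)) (by omega) hje
          omega

def eseq : ℕ → ℕ → ℕ → ℕ
  | K, _, 0 => K
  | _, n, 1 => n
  | K, n, (j+2) => if eseq K n (j+1) = 0 then 0 else eseq K n j % eseq K n (j+1)

lemma eseq_zero (K n : ℕ) : eseq K n 0 = K := rfl

lemma eseq_one (K n : ℕ) : eseq K n 1 = n := rfl

lemma eseq_two (K n j : ℕ) :
    eseq K n (j+2) = if eseq K n (j+1) = 0 then 0 else eseq K n j % eseq K n (j+1) := rfl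

lemma eseq_succ_le (K n j : ℕ) : eseq K n (j+2) ≤ eseq K n (j+1) := by
  rw [eseq_two]
  split
  · omega
  · exact le_of_lt (Nat.mod_lt _ (by omega))

lemma eseq_mono (K n : ℕ) : ∀ m j, eseq K n (j+1+m) ≤ eseq K n (j+1) := by
  intro m
  induction m with
  | zero => intro j; exact le_rfl
  | succ m ihm =>
    intro j
    calc eseq K n (j+1+(m+1)) = eseq K n (j+1+m+1) := by ring_nf
      _ ≤ eseq K n (j+1+m) := by
          rcases m with _ | m
          · exact eseq_succ_le K n j
          · have := eseq_succ_le K n (j + m + 1)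
            calc eseq K n (j+1+(m+1)+1) = eseq K n ((j+m+1)+2) := by ring_nf
              _ ≤ eseq K n ((j+m+1)+1) := eseq_succ_le K n (j+m+1)
              _ = eseq K n (j+1+(m+1)) := by ring_nf
      _ ≤ eseq K n (j+1) := ihm j

lemma eseq_shift (K n : ℕ) (hn : n ≠ 0) : ∀ j, eseq K n (j+1) = eseq n (K % n) j
  | 0 => rfl
  | 1 => by
    show (if n = 0 then 0 else K % n) = K % n
    exact if_neg hn
  | (j+2) => by
    have e1 := eseq_shift K n hn (j+1)
    have e2 := eseq_shift K n hn j
    show eseq K n ((j+1)+2) = eseq n (K % n) (j+2)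
    rw [eseq_two K n (j+1), eseq_two n (K % n) j, e1, e2]

lemma eseq_two_mul (K n j : ℕ) (h0 : eseq K n (j+1) ≤ eseq K n j)
    (hpos : 0 < eseq K n (j+2)) : 2 * eseq K n (j+2) < eseq K n j := by
  rw [eseq_two] at hpos ⊢
  by_cases h1 : eseq K n (j+1) = 0
  · rw [if_pos h1] at hpos; omega
  · rw [if_neg h1] at hpos ⊢
    have hb : 0 < eseq K n (j+1) := Nat.pos_of_ne_zero h1
    have hlt : eseq K n j % eseq K n (j+1) < eseq K n (j+1) := Nat.mod_lt _ hb
    have hdm := Nat.div_add_mod (eseq K n j) (eseq K n (j+1))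
    have hq1 : 1 ≤ eseq K n j / eseq K n (j+1) := (Nat.one_le_div_iff hb).mpr h0
    have : eseq K n (j+1) * 1 ≤ eseq K n (j+1) * (eseq K n j / eseq K n (j+1)) :=
      Nat.mul_le_mul_left _ hq1
    omega

lemma ddown_eq (K n k : ℕ) (hn : 0 < n) (hnK : n < K) (hk : k < n) :
    ddown K n k = maxRow K n k - k := by
  obtain ⟨h1, h2, h3, h4⟩ := maxRow_spec K n k hn hnK hk
  apply IsGreatest.csSup_eq
  constructor
  · simp only [Set.mem_setOf_eq]
    refine ⟨by omega, ?_, ?_⟩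
    · rw [show k + (maxRow K n k - k) = maxRow K n k from by omega]; exact h2
    · rw [show k + (maxRow K n k - k) = maxRow K n k from by omega]; exact h3
  · intro t ht
    simp only [Set.mem_setOf_eq] at ht
    have := h4 (k + t) ht.2.1 ht.2.2
    omega

lemma eseq_two' (K n : ℕ) (hn : n ≠ 0) : eseq K n 2 = K % n := by
  show (if n = 0 then 0 else K % n) = K % n
  exact if_neg hn

lemma eseq_three (K n : ℕ) (hn : n ≠ 0) (hr : K % n ≠ 0) : eseq K n 3 = n % (K % n) := by
  show (if eseq K n 2 = 0 then 0 else eseq K n 1 % eseq K n 2) = n % (K % n)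
  rw [eseq_two' K n hn, eseq_one, if_neg hr]

lemma eseq_shift2 (K n : ℕ) (hn : n ≠ 0) (hr : K % n ≠ 0) (j : ℕ) :
    eseq K n (j+2) = eseq (K % n) (n % (K % n)) j := by
  rw [show j+2 = (j+1)+1 from rfl, eseq_shift K n hn (j+1), eseq_shift n (K % n) hr j]

lemma eseq_le_one (K n m : ℕ) : eseq K n (m+1) ≤ eseq K n 1 := by
  have := eseq_mono K n m 0
  rw [show 0+1+m = m+1 from by ring] at this
  exact this

lemma eseq_le_two (K n m : ℕ) : eseq K n (m+2) ≤ eseq K n 2 := by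
  have := eseq_mono K n m 1
  rw [show 1+1+m = m+2 from by ring] at this
  exact this

lemma eseq_le_three (K n m : ℕ) : eseq K n (m+3) ≤ eseq K n 3 := by
  have := eseq_mono K n m 2
  rw [show 2+1+m = m+3 from by ring] at this
  exact this

lemma maxRow_eseq : ∀ i K n k, 0 < n → n < K →
    0 < eseq K n (2*i+2) →
    n - eseq K n (2*i+1) ≤ k → k < n - eseq K n (2*i+3) →
    maxRow K n k = K - eseq K n (2*i+2) + (k - (n - eseq K n (2*i+1))) % eseq K n (2*i+2) := by
  intro i
  induction i with
  | zero =>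
    intro K n k hn hnK hE hk1 hk2
    rw [show 2*0+2 = 2 from by ring] at hE ⊢
    rw [show 2*0+1 = 1 from by ring] at hk1 ⊢
    rw [show 2*0+3 = 3 from by ring] at hk2
    rw [eseq_two' K n (by omega)] at hE ⊢
    have hr : K % n ≠ 0 := by omega
    rw [eseq_three K n (by omega) hr] at hk2
    rw [eseq_one]
    rw [maxRow, dif_neg (by omega), if_neg hr, if_pos hk2]
    rw [Nat.sub_self, Nat.sub_zero]
  | succ i ihi =>
    intro K n k hn hnK hE hk1 hk2
    rw [show 2*(i+1)+2 = 2*i+2+2 from by ring] at hE ⊢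
    rw [show 2*(i+1)+1 = 2*i+1+2 from by ring] at hk1 ⊢
    rw [show 2*(i+1)+3 = 2*i+3+2 from by ring] at hk2
    have hr : K % n ≠ 0 := by
      have h := eseq_le_two K n (2*i+2)
      rw [eseq_two' K n (by omega)] at h
      omega
    have hn' : 0 < n % (K % n) := by
      have h := eseq_le_three K n (2*i+1)
      rw [show 2*i+1+3 = 2*i+2+2 from by ring, eseq_three K n (by omega) hr] at h
      omega
    have h3 : eseq K n (2*i+1+2) ≤ n % (K % n) := by
      have h := eseq_le_three K n (2*i)
      rw [show 2*i+3 = 2*i+1+2 from by ring, eseq_three K n (by omega) hr] at h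
      exact h
    have h5 : eseq K n (2*i+3+2) ≤ n % (K % n) := by
      have h := eseq_le_three K n (2*i+2)
      rw [show 2*i+2+3 = 2*i+3+2 from by ring, eseq_three K n (by omega) hr] at h
      exact h
    have hrn : n % (K % n) ≤ n := Nat.mod_le _ _
    have hcol : ¬ (k < n - n % (K % n)) := by omega
    have hK'n' : n % (K % n) < K % n := Nat.mod_lt _ (by omega)
    have hK'K : K % n < K := by
      have : K % n < n := Nat.mod_lt _ hn
      omega
    have hs := eseq_shift2 K n (by omega) hr
    rw [maxRow, dif_neg (by omega), if_neg hr, if_neg hcol]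
    have hkn : k < n := by omega
    rw [ihi (K % n) (n % (K % n)) (k - (n - n % (K % n))) hn' hK'n'
      (by rw [← hs]; exact hE)
      (by rw [← hs]; omega)
      (by rw [← hs]; omega)]
    rw [← hs, ← hs]
    have harg : k - (n - n % (K % n)) - (n % (K % n) - eseq K n (2*i+1+2))
        = k - (n - eseq K n (2*i+1+2)) := by omega
    rw [harg]
    have hEK' : eseq K n (2*i+2+2) ≤ K % n := by
      have h := eseq_le_two K n (2*i+2)
      rw [eseq_two' K n (by omega)] at h
      exact h
    generalize (k - (n - eseq K n (2*i+1+2))) % eseq K n (2*i+2+2) = m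
    omega

lemma lamPair_eq (K D : ℕ) : ∀ j, lamPair K D j = (eseq (K-D) D j, eseq (K-D) D (j+1))
  | 0 => rfl
  | (j+1) => by
    have ih := lamPair_eq K D j
    show ((lamPair K D j).2, if (lamPair K D j).2 = 0 then 0
        else (lamPair K D j).1 % (lamPair K D j).2) = _
    rw [ih]
    show (eseq (K-D) D (j+1), if eseq (K-D) D (j+1) = 0 then 0
        else eseq (K-D) D j % eseq (K-D) D (j+1))
      = (eseq (K-D) D (j+1), eseq (K-D) D (j+1+1))
    rw [show j+1+1 = j+2 from rfl, eseq_two]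

lemma eseq_succ_le' (K n : ℕ) (h : n ≤ K) : ∀ j, eseq K n (j+1) ≤ eseq K n j
  | 0 => h
  | (j+1) => eseq_succ_le K n j

lemma eseq_anti (K n : ℕ) (h : n ≤ K) : ∀ m j, eseq K n (j+m) ≤ eseq K n j := by
  intro m
  induction m with
  | zero => intro j; exact le_rfl
  | succ m ihm =>
    intro j
    calc eseq K n (j+(m+1)) = eseq K n ((j+m)+1) := rfl
      _ ≤ eseq K n (j+m) := eseq_succ_le' K n h (j+m)
      _ ≤ eseq K n j := ihm j

lemma final_arith (K D i k c d : ℕ)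
    (hD : 0 < D) (hKD : D < K)
    (hLD : eseq (K-D) D (2*i+1) ≤ D)
    (hLpos : 0 < eseq (K-D) D (2*i+1))
    (hSn : eseq (K-D) D (2*i) ≤ K - D)
    (hkn : k < K - D)
    (hk1 : K - D - eseq (K-D) D (2*i) ≤ k)
    (hk2 : k < K - D - eseq (K-D) D (2*i+2))
    (hmod : k % (K - D - eseq (K-D) D (2*i)) = k - (K - D - eseq (K-D) D (2*i)))
    (hcd : k % (K - D - eseq (K-D) D (2*i)) = c * eseq (K-D) D (2*i+1) + d)
    (hd : d < eseq (K-D) D (2*i+1))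
    (hmax : maxRow K (K-D) k = K - eseq (K-D) D (2*i+1)
        + (k - (K - D - eseq (K-D) D (2*i))) % eseq (K-D) D (2*i+1)) :
    ddown K (K-D) k = D + eseq (K-D) D (2*i+2)
      + (eseq (K-D) D (2*i) / eseq (K-D) D (2*i+1) - 1 - c) * eseq (K-D) D (2*i+1) := by
  set S := eseq (K-D) D (2*i) with hS
  set L := eseq (K-D) D (2*i+1) with hL
  have hL' : eseq (K-D) D (2*i+2) = S % L := by
    rw [eseq_two]
    rw [← hL, ← hS, if_neg (by omega)]
  have hdm := Nat.div_add_mod S L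
  have hL'lt : S % L < L := Nat.mod_lt _ hLpos
  have hk' : k - (K - D - S) = c * L + d := by rw [← hmod, hcd]
  rw [hL'] at hk2
  have hcβ : c < S / L := by
    by_contra hcon
    push_neg at hcon
    have h1 : L * (S / L) ≤ L * c := Nat.mul_le_mul_left L hcon
    rw [mul_comm] at hk'
    generalize hB : L * (S / L) = B at hdm h1
    generalize hA : L * c = A at h1 hk'
    omega
  rw [ddown_eq K (K-D) k (by omega) (by omega) hkn, hmax, hk']
  have hmodd : (c * L + d) % L = d := by
    rw [Nat.add_comm, Nat.add_mul_mod_self_right, Nat.mod_eq_of_lt hd]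
  rw [hmodd, hL']
  have hsplit : (S / L - 1 - c) * L + (c + 1) * L = (S / L) * L := by
    rw [← Nat.add_mul]
    congr 1
    omega
  have hexp : (c + 1) * L = c * L + L := by ring
  rw [hexp] at hsplit
  rw [mul_comm L (S / L)] at hdm
  generalize hC : (S / L - 1 - c) * L = C at hsplit ⊢
  generalize hB : (S / L) * L = B at hdm hsplit
  generalize hA : c * L = A at hk' hsplit
  omega

/-- Lemma 1: the down-distance of the diagonal entry L(k,k) for k ∈ C_i. -/
theorem stmt5 (K D l i k c d : ℕ) (hD : 0 < D) (hDK : D < K)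
    (hl : lam K D (l + 1) = 0) (hmin : ∀ j ≤ l, lam K D j ≠ 0)
    (hi : i ≤ (l + 1) / 2)
    (hk1 : K - D - lamS K D (2 * i) ≤ k)
    (hk2 : k < K - D - lam K D (2 * i + 1))
    (hcd : k % (K - D - lamS K D (2 * i)) = c * lam K D (2 * i) + d)
    (hd : d < lam K D (2 * i)) :
    ddown K (K - D) k =
      D + lam K D (2 * i + 1) + (beta K D (2 * i) - 1 - c) * lam K D (2 * i) := by
  have hlam : ∀ j, lam K D j = eseq (K-D) D (j+1) := fun j => by rw [lam, lamPair_eq]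
  have hlamS : ∀ j, lamS K D j = eseq (K-D) D j := fun j => by rw [lamS, lamPair_eq]
  have hbeta : ∀ j, beta K D j = eseq (K-D) D j / eseq (K-D) D (j+1) := fun j => by
    rw [beta, lamPair_eq]
  rw [hlamS] at hk1 hcd
  rw [hlam] at hk2 hcd hd
  rw [hlam (2*i+1), hlam (2*i), hbeta (2*i)]
  rw [show 2*i+1+1 = 2*i+2 from by ring] at hk2 ⊢
  have hLpos : 0 < eseq (K-D) D (2*i+1) := by omega
  have hkn : k < K - D := by omega
  have hLD : eseq (K-D) D (2*i+1) ≤ D := eseq_le_one (K-D) D (2*i)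
  rcases Nat.lt_trichotomy D (K - D) with hDn | hDn | hDn
  · -- D < K - D
    have hKmod : K % (K - D) = D := by
      have e : (K - D) + D = K := by omega
      calc K % (K - D) = ((K - D) + D) % (K - D) := by rw [e]
        _ = D % (K - D) := Nat.add_mod_left _ _
        _ = D := Nat.mod_eq_of_lt hDn
    have hEs : ∀ j, eseq K (K - D) (j+1) = eseq (K-D) D j := by
      intro j
      rw [eseq_shift K (K-D) (by omega) j, hKmod]
    have hSn : eseq (K-D) D (2*i) ≤ K - D := by
      have h := eseq_anti (K-D) D (le_of_lt hDn) (2*i) 0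
      rw [show 0+2*i = 2*i from by ring] at h
      exact h
    have hmax : maxRow K (K-D) k = K - eseq (K-D) D (2*i+1)
        + (k - (K - D - eseq (K-D) D (2*i))) % eseq (K-D) D (2*i+1) := by
      have hb1 : 0 < eseq K (K-D) (2*i+2) := by
        rw [show 2*i+2 = (2*i+1)+1 from rfl, hEs (2*i+1)]
        exact hLpos
      have hb2 : K - D - eseq K (K-D) (2*i+1) ≤ k := by
        rw [hEs (2*i)]
        exact hk1
      have hb3 : k < K - D - eseq K (K-D) (2*i+3) := by
        rw [show 2*i+3 = (2*i+2)+1 from rfl, hEs (2*i+2)]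
        exact hk2
      have h := maxRow_eseq i K (K-D) k (by omega) (by omega) hb1 hb2 hb3
      rw [show 2*i+2 = (2*i+1)+1 from rfl, hEs (2*i+1), hEs (2*i)] at h
      exact h
    have hmod : k % (K - D - eseq (K-D) D (2*i)) = k - (K - D - eseq (K-D) D (2*i)) := by
      rcases i with _ | i'
      · have h0 : eseq (K-D) D (2*0) = K - D := rfl
        rw [h0, Nat.sub_self, Nat.mod_zero, Nat.sub_zero]
      · have hpos2 : 0 < eseq (K-D) D (2*i'+2) := by
          have h := eseq_succ_le (K-D) D (2*i'+1)
          rw [show 2*i'+1+2 = 2*(i'+1)+1 from by ring,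
            show 2*i'+1+1 = 2*i'+2 from by ring] at h
          omega
        have h2m := eseq_two_mul (K-D) D (2*i')
          (eseq_succ_le' (K-D) D (le_of_lt hDn) (2*i')) hpos2
        have hup : eseq (K-D) D (2*i') ≤ K - D := by
          have h := eseq_anti (K-D) D (le_of_lt hDn) (2*i') 0
          rw [show 0+2*i' = 2*i' from by ring] at h
          exact h
        rw [show 2*(i'+1) = 2*i'+2 from by ring] at hk1 ⊢
        rw [Nat.mod_eq_sub_mod hk1, Nat.mod_eq_of_lt (by omega)]
    exact final_arith K D i k c d hD hDK hLD hLpos hSn hkn hk1 hk2 hmod hcd hd hmax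
  · -- D = K - D
    have h2 : eseq (K-D) D 2 = 0 := by
      rw [eseq_two' (K-D) D (by omega), ← hDn, Nat.mod_self]
    rcases i with _ | i'
    · rw [show 2*0+2 = 2 from by norm_num] at hk2 ⊢
      rw [show 2*0+1 = 1 from by norm_num] at hcd hd hLpos hLD ⊢
      rw [show 2*0 = 0 from by norm_num] at hk1 hcd ⊢
      have h0 : eseq (K-D) D 0 = K - D := rfl
      have h1 : eseq (K-D) D 1 = D := rfl
      rw [h0, Nat.sub_self, Nat.mod_zero] at hcd
      rw [h1] at hcd hd
      have hc0 : c = 0 := by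
        by_contra hc
        have hle : D ≤ c * D := Nat.le_mul_of_pos_left D (by omega)
        generalize hA : c * D = A at hle hcd
        rw [h2, Nat.sub_zero] at hk2
        omega
      subst hc0
      rw [h2, h0, h1]
      have hβ : (K - D) / D = 1 := by rw [← hDn, Nat.div_self hD]
      rw [hβ]
      have hr0 : K % (K - D) = 0 := by
        have e : (K - D) + (K - D) = K := by omega
        calc K % (K - D) = ((K-D) + (K-D)) % (K - D) := by rw [e]
          _ = (K - D) % (K - D) := Nat.add_mod_left _ _
          _ = 0 := Nat.mod_self _
      have hMv : maxRow K (K-D) k = K - (K-D) + k := by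
        rw [maxRow, dif_neg (by omega), if_pos hr0, Nat.mod_eq_of_lt (by omega)]
      have hdd := ddown_eq K (K-D) k (by omega) (by omega) (by omega)
      rw [hdd, hMv]
      simp
      omega
    · exfalso
      have h := eseq_le_two (K-D) D (2*i'+1)
      rw [show 2*i'+1+2 = 2*(i'+1)+1 from by ring, h2] at h
      omega
  · -- K - D < D
    rcases i with _ | i'
    · exfalso
      have h2' : eseq (K-D) D 2 = K - D := by
        rw [eseq_two' (K-D) D (by omega), Nat.mod_eq_of_lt hDn]
      rw [show 2*0+2 = 2 from by norm_num, h2'] at hk2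
      omega
    · have hKmod : K % (K - D) = D % (K - D) := by
        have e : (K - D) + D = K := by omega
        calc K % (K - D) = ((K - D) + D) % (K - D) := by rw [e]
          _ = D % (K - D) := Nat.add_mod_left _ _
      have hEs : ∀ j, eseq K (K - D) (j+1) = eseq (K-D) D (j+2) := by
        intro j
        have h1 : eseq (K-D) D ((j+1)+1) = eseq D ((K-D) % D) (j+1) :=
          eseq_shift (K-D) D (by omega) (j+1)
        rw [Nat.mod_eq_of_lt hDn] at h1
        rw [eseq_shift K (K-D) (by omega) j, hKmod,
          ← eseq_shift D (K-D) (by omega) j, ← h1]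
      have hSn : eseq (K-D) D (2*(i'+1)) ≤ K - D := by
        have h := eseq_le_two (K-D) D (2*i')
        rw [show 2*i'+2 = 2*(i'+1) from by ring,
          eseq_two' (K-D) D (by omega), Nat.mod_eq_of_lt hDn] at h
        exact h
      have hmax : maxRow K (K-D) k = K - eseq (K-D) D (2*(i'+1)+1)
          + (k - (K - D - eseq (K-D) D (2*(i'+1)))) % eseq (K-D) D (2*(i'+1)+1) := by
        have hb1 : 0 < eseq K (K-D) (2*i'+2) := by
          rw [show 2*i'+2 = (2*i'+1)+1 from rfl, hEs (2*i'+1),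
            show 2*i'+1+2 = 2*(i'+1)+1 from by ring]
          exact hLpos
        have hb2 : K - D - eseq K (K-D) (2*i'+1) ≤ k := by
          rw [hEs (2*i'), show 2*i'+2 = 2*(i'+1) from by ring]
          exact hk1
        have hb3 : k < K - D - eseq K (K-D) (2*i'+3) := by
          rw [show 2*i'+3 = (2*i'+2)+1 from rfl, hEs (2*i'+2),
            show 2*i'+2+2 = 2*(i'+1)+2 from by ring]
          exact hk2
        have h := maxRow_eseq i' K (K-D) k (by omega) (by omega) hb1 hb2 hb3
        rw [show 2*i'+2 = (2*i'+1)+1 from rfl, hEs (2*i'+1),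
          show 2*i'+1+2 = 2*(i'+1)+1 from by ring, hEs (2*i'),
          show 2*i'+2 = 2*(i'+1) from by ring] at h
        exact h
      have hmod : k % (K - D - eseq (K-D) D (2*(i'+1)))
          = k - (K - D - eseq (K-D) D (2*(i'+1))) := by
        rcases i' with _ | i''
        · have h2' : eseq (K-D) D (2*(0+1)) = K - D := by
            rw [show 2*(0+1) = 2 from by norm_num,
              eseq_two' (K-D) D (by omega), Nat.mod_eq_of_lt hDn]
          rw [h2', Nat.sub_self, Nat.mod_zero, Nat.sub_zero]
        · have hpos2 : 0 < eseq (K-D) D (2*i''+2+2) := by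
            have h := eseq_succ_le (K-D) D (2*i''+3)
            rw [show 2*i''+3+2 = 2*(i''+1+1)+1 from by ring,
              show 2*i''+3+1 = 2*i''+2+2 from by ring] at h
            omega
          have h0 := eseq_succ_le (K-D) D (2*i''+1)
          rw [show 2*i''+1+2 = 2*i''+2+1 from by ring,
            show 2*i''+1+1 = 2*i''+2 from by ring] at h0
          have h2m := eseq_two_mul (K-D) D (2*i''+2) h0 hpos2
          have hup : eseq (K-D) D (2*i''+2) ≤ K - D := by
            have h := eseq_le_two (K-D) D (2*i'')
            rw [eseq_two' (K-D) D (by omega), Nat.mod_eq_of_lt hDn] at h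
            exact h
          rw [show 2*(i''+1+1) = 2*i''+2+2 from by ring] at hk1 ⊢
          rw [Nat.mod_eq_sub_mod hk1, Nat.mod_eq_of_lt (by omega)]
      exact final_arith K D (i'+1) k c d hD hDK hLD hLpos hSn hkn hk1 hk2 hmod hcd hd hmax
end

section
/- Let L be the (K,D) AIR matrix and let L(j,k)=1 lie in an even-submatrix I_{λ_{2i} × β_{2i}λ_{2i}} with within-block column index k_R ∈ [0, (β_{2i}−1)λ_{2i} − 1]. Then the right-distance of L(j,k) equals λ_{2i}; i.e., the smallest k′ > k with L(j,k′)=1 satisfies k′ − k = λ_{2i}. -/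
namespace AIRaux

/-- Unguarded Euclid iteration. -/
def pe2 : ℕ × ℕ → ℕ → ℕ × ℕ
  | p, 0 => p
  | p, (m+1) => pe2 (p.2, p.1 % p.2) m

/-- second component of the chain. -/
def sE (a b t : ℕ) : ℕ := (pe2 (a, b) t).2

lemma pe2_succ (p : ℕ × ℕ) (t : ℕ) :
    pe2 p (t+1) = ((pe2 p t).2, (pe2 p t).1 % (pe2 p t).2) := by
  induction t generalizing p with
  | zero => rfl
  | succ t ih => rw [show pe2 p (t+2) = pe2 (p.2, p.1 % p.2) (t+1) from rfl, ih]; rfl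

lemma sE_zero (a b : ℕ) : sE a b 0 = b := rfl

lemma sE_one (a b : ℕ) : sE a b 1 = a % b := rfl

lemma pe2_fst (a b t : ℕ) : (pe2 (a, b) (t+1)).1 = sE a b t := by
  rw [pe2_succ]; rfl

lemma sE_rec (a b t : ℕ) : sE a b (t+2) = sE a b t % sE a b (t+1) := by
  show (pe2 (a,b) (t+2)).2 = _
  rw [pe2_succ (a,b) (t+1), pe2_fst]; rfl

lemma sE_shift (a b t : ℕ) : sE a b (t+1) = sE b (a % b) t := rfl

lemma sE_succ_lt (a b t : ℕ) (h : sE a b t ≠ 0) : sE a b (t+1) < sE a b t := by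
  cases t with
  | zero => exact Nat.mod_lt _ (Nat.pos_of_ne_zero h)
  | succ t => rw [sE_rec]; exact Nat.mod_lt _ (Nat.pos_of_ne_zero h)

lemma sE_add_le (a b u : ℕ) : ∀ d : ℕ, (∀ t, u ≤ t → t < u + d → sE a b t ≠ 0) →
    sE a b (u + d) ≤ sE a b u := by
  intro d
  induction d with
  | zero => intro _; exact le_rfl
  | succ d ih =>
    intro h
    show sE a b (u + d + 1) ≤ sE a b u
    have h1 : sE a b (u + d) ≠ 0 := h _ (Nat.le_add_right _ _) (by omega)
    have := sE_succ_lt a b (u + d) h1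
    have h2 := ih (fun t ht ht' => h t ht (by omega))
    omega

lemma sE_le (a b u v : ℕ) (huv : u ≤ v) (h : ∀ t, u ≤ t → t < v → sE a b t ≠ 0) :
    sE a b v ≤ sE a b u := by
  obtain ⟨d, rfl⟩ := Nat.exists_eq_add_of_le huv
  exact sE_add_le a b u d h

end AIRaux

namespace AIRaux

lemma airEntry_rec (a b j k : ℕ) (h1 : ¬(b = 0 ∨ a ≤ b)) (h2 : a - a % b ≤ j)
    (h3 : b - b % (a % b) ≤ k) :
    airEntry a b j k = airEntry (a % b) (b % (a % b)) (j - (a - a % b)) (k - (b - b % (a % b))) := by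
  rw [airEntry]
  simp [h1, Nat.not_lt.2 h2, Nat.not_lt.2 h3]

lemma airEntry_block (a b j k : ℕ) (h1 : ¬(b = 0 ∨ a ≤ b)) (h2 : a - a % b ≤ j)
    (h3 : k < b - b % (a % b)) :
    airEntry a b j k = decide (k % (a % b) = j - (a - a % b)) := by
  rw [airEntry]
  simp [h1, Nat.not_lt.2 h2, h3]

lemma genCore : ∀ m a b j k : ℕ, b < a →
    (∀ t, t ≤ 2*m+1 → sE a b t ≠ 0) →
    a - sE a b (2*m+1) ≤ j → j < a →
    b - sE a b (2*m) ≤ k →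
    k + sE a b (2*m+1) < b - sE a b (2*m+2) →
    airEntry a b j k = true →
    dright a b j k = sE a b (2*m+1) := by
  intro m
  induction m with
  | zero =>
    intro a b j k hba hnz hj1 hj2 _hk1 hk2 he
    have e1 : sE a b (2*0+1) = a % b := rfl
    have e2 : sE a b (2*0+2) = b % (a % b) := rfl
    rw [e1] at hj1
    rw [e1, e2] at hk2
    rw [e1]
    have hb0 : b ≠ 0 := hnz 0 (by omega)
    have hR0 : a % b ≠ 0 := hnz 1 (by omega)
    have hRpos : 0 < a % b := Nat.pos_of_ne_zero hR0
    have h1 : ¬(b = 0 ∨ a ≤ b) := by push_neg; exact ⟨hb0, hba⟩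
    have hmb : b % (a % b) ≤ b := Nat.mod_le _ _
    have hkblk : k < b - b % (a % b) := by omega
    have hc : k % (a % b) = j - (a - a % b) := by
      have h := airEntry_block a b j k h1 hj1 hkblk
      rw [h] at he
      exact of_decide_eq_true he
    have hmem : a % b ∈ {t : ℕ | 0 < t ∧ k + t < b ∧ airEntry a b j (k + t) = true} := by
      refine ⟨hRpos, by omega, ?_⟩
      rw [airEntry_block a b j (k + a % b) h1 hj1 (by omega)]
      rw [Nat.add_mod_right, hc]
      simp
    have hlb : ∀ t ∈ {t : ℕ | 0 < t ∧ k + t < b ∧ airEntry a b j (k + t) = true}, a % b ≤ t := by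
      rintro t ⟨ht0, _htb, hte⟩
      by_contra hlt
      push_neg at hlt
      rw [airEntry_block a b j (k + t) h1 hj1 (by omega)] at hte
      have hceq : (k + t) % (a % b) = j - (a - a % b) := of_decide_eq_true hte
      rw [← hc] at hceq
      have hmod : (k + t) % (a % b) = (k % (a % b) + t) % (a % b) := by
        conv_lhs => rw [Nat.add_mod, Nat.mod_eq_of_lt hlt]
      have hklt : k % (a % b) < a % b := Nat.mod_lt _ hRpos
      rcases lt_or_ge (k % (a % b) + t) (a % b) with hx | hx
      · rw [hmod, Nat.mod_eq_of_lt hx] at hceq; omega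
      · rw [hmod, Nat.mod_eq_sub_mod hx, Nat.mod_eq_of_lt (by omega)] at hceq; omega
    have hne : {t : ℕ | 0 < t ∧ k + t < b ∧ airEntry a b j (k + t) = true}.Nonempty :=
      ⟨a % b, hmem⟩
    exact le_antisymm (Nat.sInf_le hmem) (hlb _ (Nat.sInf_mem hne))
  | succ m ih =>
    intro a b j k hba hnz hj1 hj2 hk1 hk2 he
    have E1 : 2*(m+1) = 2*m+2 := by ring
    have E2 : 2*(m+1)+1 = 2*m+3 := by ring
    have E3 : 2*(m+1)+2 = 2*m+4 := by ring
    rw [E2] at hj1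
    rw [E1] at hk1
    rw [E2, E3] at hk2
    rw [E2] at hnz ⊢
    have hb0 : b ≠ 0 := hnz 0 (by omega)
    have hR0 : sE a b 1 ≠ 0 := hnz 1 (by omega)
    have h1 : ¬(b = 0 ∨ a ≤ b) := by push_neg; exact ⟨hb0, hba⟩
    set a' := a % b with ha'
    set b' := b % (a % b) with hb'
    have hsE1 : sE a b 1 = a' := rfl
    have hsE2 : sE a b 2 = b' := rfl
    have hshift : ∀ t, sE a' b' t = sE a b (t+2) := fun t => rfl
    have hA : sE a' b' (2*m) = sE a b (2*m+2) := hshift (2*m)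
    have hB : sE a' b' (2*m+1) = sE a b (2*m+3) :=
      (hshift (2*m+1)).trans (congrArg (sE a b) (by omega : 2*m+1+2 = 2*m+3))
    have hC : sE a' b' (2*m+2) = sE a b (2*m+4) :=
      (hshift (2*m+2)).trans (congrArg (sE a b) (by omega : 2*m+2+2 = 2*m+4))
    have ha'a : a' < a := lt_trans (Nat.mod_lt _ (Nat.pos_of_ne_zero hb0)) hba
    have hb'a' : b' < a' := Nat.mod_lt _ (Nat.pos_of_ne_zero hR0)
    have hmono1 : sE a b (2*m+3) ≤ sE a b 1 :=
      sE_le a b 1 (2*m+3) (by omega) (fun t ht ht' => hnz t (by omega))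
    have hmono2 : sE a b (2*m+2) ≤ sE a b 2 :=
      sE_le a b 2 (2*m+2) (by omega) (fun t ht ht' => hnz t (by omega))
    have hmono3 : sE a b (2*m+4) ≤ sE a b 2 :=
      sE_le a b 2 (2*m+4) (by omega) (fun t ht ht' => hnz t (by omega))
    have hja : a - a' ≤ j := by omega
    have hkb : b - b' ≤ k := by omega
    have hb'b : b' ≤ b := Nat.mod_le _ _
    have hset : {t : ℕ | 0 < t ∧ k + t < b ∧ airEntry a b j (k + t) = true} =
        {t : ℕ | 0 < t ∧ (k - (b - b')) + t < b' ∧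
          airEntry a' b' (j - (a - a')) ((k - (b - b')) + t) = true} := by
      ext t
      simp only [Set.mem_setOf_eq]
      constructor
      · rintro ⟨ht0, htb, hte⟩
        refine ⟨ht0, by omega, ?_⟩
        rw [airEntry_rec a b j (k + t) h1 hja (by omega)] at hte
        rw [show k - (b - b') + t = k + t - (b - b') by omega]
        exact hte
      · rintro ⟨ht0, htb, hte⟩
        refine ⟨ht0, by omega, ?_⟩
        rw [airEntry_rec a b j (k + t) h1 hja (by omega)]
        rw [show k - (b - b') + t = k + t - (b - b') by omega] at hte
        exact hte
    have hd : dright a b j k = dright a' b' (j - (a - a')) (k - (b - b')) := by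
      unfold dright
      rw [hset]
    rw [hd]
    have hfin := ih a' b' (j - (a - a')) (k - (b - b')) hb'a'
      (fun t ht => by rw [hshift]; exact hnz (t+2) (by omega))
      (by omega) (by omega) (by omega) (by omega)
      (by rw [← airEntry_rec a b j k h1 hja hkb]; exact he)
    rw [hfin, hB]

lemma genWrap (m a b j k : ℕ) (hba : b < a)
    (hnz : ∀ t, t ≤ 2*m+1 → sE a b t ≠ 0)
    (hj1 : a - sE a b (2*m+1) ≤ j) (hj2 : j < a)
    (hk1 : b - sE a b (2*m) ≤ k)
    (hk2 : k < b - sE a b (2*m) + sE a b (2*m) / sE a b (2*m+1) * sE a b (2*m+1))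
    (hkR : k % (b - sE a b (2*m)) < (sE a b (2*m) / sE a b (2*m+1) - 1) * sE a b (2*m+1))
    (he : airEntry a b j k = true) :
    dright a b j k = sE a b (2*m+1) := by
  have hR0 : sE a b (2*m+1) ≠ 0 := hnz _ le_rfl
  have hS0 : sE a b (2*m) ≠ 0 := hnz _ (by omega)
  have hRS : sE a b (2*m+1) < sE a b (2*m) := sE_succ_lt a b (2*m) hS0
  have hrec : sE a b (2*m+2) = sE a b (2*m) % sE a b (2*m+1) := sE_rec a b (2*m)
  have hdiv := Nat.mod_add_div' (sE a b (2*m)) (sE a b (2*m+1))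
  have hbeta : 1 ≤ sE a b (2*m) / sE a b (2*m+1) :=
    (Nat.one_le_div_iff (Nat.pos_of_ne_zero hR0)).2 hRS.le
  have hSb : sE a b (2*m) ≤ b := by
    have h := sE_le a b 0 (2*m) (by omega) (fun t ht ht' => hnz t (by omega))
    rwa [sE_zero] at h
  have hmodR : sE a b (2*m) % sE a b (2*m+1) < sE a b (2*m+1) :=
    Nat.mod_lt _ (Nat.pos_of_ne_zero hR0)
  have hmul2 : (sE a b (2*m) / sE a b (2*m+1) - 1) * sE a b (2*m+1) =
      sE a b (2*m) / sE a b (2*m+1) * sE a b (2*m+1) - sE a b (2*m+1) := by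
    rw [Nat.sub_mul, one_mul]
  have hmul3 : sE a b (2*m+1) ≤ sE a b (2*m) / sE a b (2*m+1) * sE a b (2*m+1) := by
    calc sE a b (2*m+1) = 1 * sE a b (2*m+1) := (one_mul _).symm
      _ ≤ sE a b (2*m) / sE a b (2*m+1) * sE a b (2*m+1) :=
        Nat.mul_le_mul_right _ hbeta
  have hgoal : k + sE a b (2*m+1) < b - sE a b (2*m+2) := by
    rcases Nat.eq_zero_or_pos (b - sE a b (2*m)) with hX | hX
    · rw [hX, Nat.mod_zero] at hkR
      omega
    · have hm : 1 ≤ m := by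
        rcases Nat.eq_zero_or_pos m with rfl | h
        · have hS : sE a b (2*0) = b := sE_zero a b
          omega
        · exact h
      have hS2 : sE a b (2*m) ≤ sE a b 2 :=
        sE_le a b 2 (2*m) (by omega) (fun t ht ht' => hnz t (by omega))
      have h10 : sE a b 1 ≠ 0 := hnz 1 (by omega)
      have h2rec : sE a b 2 = sE a b 0 % sE a b 1 := sE_rec a b 0
      rw [sE_zero] at h2rec
      have h1b : sE a b 1 < b := by
        have h := sE_succ_lt a b 0 (by rw [sE_zero]; omega)
        rwa [sE_zero] at h
      have hdiv1 := Nat.mod_add_div' b (sE a b 1)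
      have hq1 : 1 ≤ b / sE a b 1 :=
        (Nat.one_le_div_iff (Nat.pos_of_ne_zero h10)).2 h1b.le
      have hmulb : sE a b 1 ≤ b / sE a b 1 * sE a b 1 := by
        calc sE a b 1 = 1 * sE a b 1 := (one_mul _).symm
          _ ≤ b / sE a b 1 * sE a b 1 := Nat.mul_le_mul_right _ hq1
      have h2le : sE a b 2 ≤ b - sE a b 1 := by omega
      have h21 : sE a b 2 < sE a b 1 := sE_succ_lt a b 1 h10
      have hSX : sE a b (2*m) ≤ b - sE a b (2*m) := by omega
      have hk2' : k < 2 * (b - sE a b (2*m)) := by omega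
      have hkmod : k % (b - sE a b (2*m)) = k - (b - sE a b (2*m)) := by
        rw [Nat.mod_eq_sub_mod hk1, Nat.mod_eq_of_lt (by omega)]
      rw [hkmod] at hkR
      omega
  exact genCore m a b j k hba hnz hj1 hj2 hk1 hgoal he

end AIRaux

namespace AIRaux

lemma lamPair_pe2 (K D : ℕ) : ∀ t s : ℕ, (∀ u, u < t → lam K D (s+u) ≠ 0) →
    lamPair K D (s+t) = pe2 (lamPair K D s) t := by
  intro t
  induction t with
  | zero => intro s _; rfl
  | succ t ih =>
    intro s h
    have h0 : lam K D s ≠ 0 := by have := h 0 (by omega); simpa using this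
    have h0' : (lamPair K D s).2 ≠ 0 := h0
    have hstep : lamPair K D (s+1) =
        ((lamPair K D s).2, (lamPair K D s).1 % (lamPair K D s).2) := by
      show ((lamPair K D s).2,
        if (lamPair K D s).2 = 0 then 0 else (lamPair K D s).1 % (lamPair K D s).2) = _
      rw [if_neg h0']
    calc lamPair K D (s + (t+1)) = lamPair K D ((s+1) + t) := by
          rw [show s + (t+1) = (s+1)+t by omega]
      _ = pe2 (lamPair K D (s+1)) t := ih (s+1) (fun u hu => by
            have := h (u+1) (by omega)
            rwa [show s + (u+1) = s + 1 + u by omega] at this)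
      _ = pe2 (lamPair K D s) (t+1) := by rw [hstep]; rfl

end AIRaux

open AIRaux

/-- Lemma 3 (case i): right-distance of an entry of the even submatrix whose
within-block column index lies in [0, (β_{2i}−1)λ_{2i} − 1] equals λ_{2i}. -/
theorem stmt8 (K D l i j k : ℕ) (hD : 0 < D) (hDK : D < K)
    (hl : lam K D (l + 1) = 0) (hmin : ∀ j ≤ l, lam K D j ≠ 0)
    (hi : 2 * i ≤ l)
    (hj1 : K - lam K D (2 * i) ≤ j) (hj2 : j < K)
    (hk1 : K - D - lamS K D (2 * i) ≤ k)
    (hk2 : k < K - D - lamS K D (2 * i) + beta K D (2 * i) * lam K D (2 * i))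
    (he : airEntry K (K - D) j k = true)
    (hkR : k % (K - D - lamS K D (2 * i)) < (beta K D (2 * i) - 1) * lam K D (2 * i)) :
    dright K (K - D) j k = lam K D (2 * i) := by
  have hn0 : K - D ≠ 0 := by omega
  have hnK : K - D < K := by omega
  rcases lt_trichotomy D (K - D) with hA | hEq | hB
  · -- case D < K - D
    have hKmod : K % (K - D) = D := by
      rw [Nat.mod_eq_sub_mod (by omega : K - D ≤ K), show K - (K - D) = D by omega,
        Nat.mod_eq_of_lt hA]
    have hpe : ∀ t, pe2 (K, K - D) (t+1) = pe2 (K - D, D) t := fun t => by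
      rw [show pe2 (K, K - D) (t+1) = pe2 (K - D, K % (K - D)) t from rfl, hKmod]
    have hlp : ∀ t, t ≤ l + 1 → lamPair K D t = pe2 (K - D, D) t := by
      intro t ht
      have h := lamPair_pe2 K D t 0 (fun u hu => by
        have := hmin u (by omega); simpa using this)
      simpa [show lamPair K D 0 = (K - D, D) from rfl] using h
    have hsE : ∀ t, t ≤ l + 1 → sE K (K - D) (t+1) = lam K D t := by
      intro t ht
      show (pe2 (K, K - D) (t+1)).2 = _
      rw [hpe t, ← hlp t ht]
      rfl
    have hlamS : ∀ t, t ≤ l + 1 → sE K (K - D) t = lamS K D t := by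
      intro t ht
      cases t with
      | zero => rfl
      | succ u => rw [hsE u (by omega)]; rfl
    have hbeta' : beta K D (2*i) = lamS K D (2*i) / lam K D (2*i) := rfl
    have hnz : ∀ t, t ≤ 2*i+1 → sE K (K - D) t ≠ 0 := by
      intro t ht
      rw [hlamS t (by omega)]
      cases t with
      | zero => show K - D ≠ 0; omega
      | succ u => show lam K D u ≠ 0; exact hmin u (by omega)
    have h1 := hsE (2*i) (by omega)
    have h2 := hlamS (2*i) (by omega)
    have hres := genWrap i K (K - D) j k hnK hnz
      (by rw [h1]; exact hj1) hj2
      (by rw [h2]; exact hk1)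
      (by rw [h2, h1]; rw [hbeta'] at hk2; exact hk2)
      (by rw [h2, h1]; rw [hbeta'] at hkR; exact hkR)
      he
    rw [hres, h1]
  · -- case D = K - D
    rcases Nat.eq_zero_or_pos i with rfl | hi1
    · exfalso
      have e : K - D - lamS K D (2*0) = 0 := by show K - D - (K - D) = 0; omega
      rw [e, Nat.mod_zero] at hkR
      have e2 : beta K D (2*0) = 1 := by
        show (K - D) / D = 1
        rw [← hEq, Nat.div_self hD]
      rw [e2] at hkR
      omega
    · exfalso
      have hz : lam K D 1 = 0 := by
        show (if D = 0 then 0 else (K - D) % D) = 0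
        rw [if_neg (by omega : ¬ D = 0), ← hEq, Nat.mod_self]
      exact hmin 1 (by omega) hz
  · -- case K - D < D
    rcases Nat.eq_zero_or_pos i with rfl | hi1
    · exfalso
      have e1 : K - D - lamS K D (2*0) = 0 := by show K - D - (K - D) = 0; omega
      have e2 : beta K D (2*0) = 0 := by
        show (K - D) / D = 0
        exact Nat.div_eq_of_lt hB
      rw [e1, e2] at hk2
      omega
    · obtain ⟨i', rfl⟩ : ∃ i', i = i' + 1 := ⟨i - 1, by omega⟩
      have E : 2*(i'+1) = 2*i'+2 := by ring
      rw [E] at hj1 hk1 hk2 hkR hi ⊢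
      have hl1 : lam K D 1 = K - D := by
        show (if D = 0 then 0 else (K - D) % D) = K - D
        rw [if_neg (by omega : ¬ D = 0), Nat.mod_eq_of_lt hB]
      have hlp1 : lamPair K D 1 = (D, K - D) := by
        show (D, if D = 0 then 0 else (K - D) % D) = (D, K - D)
        rw [if_neg (by omega : ¬ D = 0), Nat.mod_eq_of_lt hB]
      have hlp2 : lamPair K D 2 = (K - D, D % (K - D)) := by
        show ((lamPair K D 1).2,
          if (lamPair K D 1).2 = 0 then 0 else (lamPair K D 1).1 % (lamPair K D 1).2) = _
        rw [hlp1]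
        show (K - D, if K - D = 0 then 0 else D % (K - D)) = _
        rw [if_neg (by omega : ¬ K - D = 0)]
      have hKmodB : K % (K - D) = D % (K - D) := by
        rw [Nat.mod_eq_sub_mod (by omega : K - D ≤ K), show K - (K - D) = D by omega]
      have hpeB : ∀ t, pe2 (K, K - D) (t+1) = pe2 (K - D, D % (K - D)) t := fun t => by
        rw [show pe2 (K, K - D) (t+1) = pe2 (K - D, K % (K - D)) t from rfl, hKmodB]
      have hlpB : ∀ t, t + 2 ≤ l + 1 → lamPair K D (t+2) = pe2 (K - D, D % (K - D)) t := by
        intro t ht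
        have h := lamPair_pe2 K D t 2 (fun u hu => hmin (2+u) (by omega))
        rw [show (2:ℕ) + t = t + 2 by omega] at h
        rw [h, hlp2]
      have hsEB : ∀ t, t + 2 ≤ l + 1 → sE K (K - D) (t+1) = lam K D (t+2) := by
        intro t ht
        show (pe2 (K, K - D) (t+1)).2 = (lamPair K D (t+2)).2
        rw [hpeB t, hlpB t ht]
      have hsE' : ∀ t, t + 1 ≤ l → sE K (K - D) t = lam K D (t+1) := by
        intro t ht
        cases t with
        | zero => rw [hl1]; rfl
        | succ u => exact hsEB u (by omega)
      have hlamS' : lamS K D (2*i'+2) = lam K D (2*i'+1) := rfl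
      have hbeta' : beta K D (2*i'+2) = lamS K D (2*i'+2) / lam K D (2*i'+2) := rfl
      have h1 : sE K (K - D) (2*i'+1) = lam K D (2*i'+2) := hsE' (2*i'+1) (by omega)
      have h2 : sE K (K - D) (2*i') = lam K D (2*i'+1) := hsE' (2*i') (by omega)
      have hnz : ∀ t, t ≤ 2*i'+1 → sE K (K - D) t ≠ 0 := by
        intro t ht
        rw [hsE' t (by omega)]
        exact hmin (t+1) (by omega)
      have hres := genWrap i' K (K - D) j k hnK hnz
        (by rw [h1]; exact hj1) hj2
        (by rw [h2, ← hlamS']; exact hk1)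
        (by rw [h2, h1, ← hlamS']; rw [hbeta'] at hk2; exact hk2)
        (by rw [h2, h1, ← hlamS']; rw [hbeta'] at hkR; exact hkR)
        he
      rw [hres, h1]
end

section
/- Let L be the (K,D) AIR matrix and let L(j,k)=1 lie in an even-submatrix I_{λ_{2i} × β_{2i}λ_{2i}} (i ∈ [0, ⌊l/2⌋−1]) with within-block column index k_R ∈ [(β_{2i}−1)λ_{2i}, β_{2i}λ_{2i} − 1] and within-block row index j_R = cλ_{2i+1} + d for integers c, d with 0 ≤ d < λ_{2i+1}. Then the right-distance of L(j,k) equals λ_{2i} − cλ_{2i+1}. -/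
namespace AirAux

lemma airEntry_eq (A B j k : ℕ) : airEntry A B j k =
    if B = 0 ∨ A ≤ B then decide (j = k)
    else
      if j < A - A % B then decide (j % B = k % B)
      else
        if k < B - B % (A % B) then decide (k % (A % B) = j - (A - A % B))
        else airEntry (A % B) (B % (A % B)) (j - (A - A % B)) (k - (B - B % (A % B))) := by
  rw [airEntry, dite_eq_ite]

/-- the first 1 in row `j` is at column `j % B`. -/
lemma first_mem (A B j : ℕ) (hj : j < A) : airEntry A B j (j % B) = true := by
  rw [airEntry_eq]
  by_cases h0 : B = 0 ∨ A ≤ B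
  · rw [if_pos h0]
    rcases h0 with h0 | h0
    · subst h0; simp
    · rw [Nat.mod_eq_of_lt (lt_of_lt_of_le hj h0)]; simp
  · rw [if_neg h0]
    push_neg at h0
    have hB : 0 < B := Nat.pos_of_ne_zero h0.1
    by_cases htop : j < A - A % B
    · rw [if_pos htop]
      have : j % B % B = j % B := Nat.mod_mod_of_dvd j (dvd_refl B)
      simp [this]
    · rw [if_neg htop]
      push_neg at htop
      set b := A % B with hbdef
      have hbB : b < B := Nat.mod_lt _ hB
      have hb0 : 0 < b := by omega
      set r := j - (A - b) with hrdef
      have hr : r < b := by omega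
      have hAeq : B * (A / B) + A % B = A := Nat.div_add_mod A B
      have hjeq : j = B * (A / B) + r := by omega
      have hjmod : j % B = r := by
        rw [hjeq, Nat.mul_add_mod]
        exact Nat.mod_eq_of_lt (lt_trans hr hbB)
      -- middle band width ≥ b
      have hq1 : 1 ≤ B / b := (Nat.one_le_div_iff hb0).2 hbB.le
      have hw : b * (B / b) + B % b = B := Nat.div_add_mod B b
      have hble : b * 1 ≤ b * (B / b) := Nat.mul_le_mul_left b hq1
      have hwidth : b ≤ B - B % b := by omega
      rw [hjmod, if_pos (by omega : r < B - B % b)]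
      simp [Nat.mod_eq_of_lt hr]

/-- there is no 1 in row `j` before column `j % B`. -/
lemma first_min (A B j k : ℕ) (hj : j < A) (hk : k < j % B) :
    airEntry A B j k = false := by
  rw [airEntry_eq]
  by_cases h0 : B = 0 ∨ A ≤ B
  · rw [if_pos h0]
    have : j % B ≤ j := Nat.mod_le _ _
    simp; omega
  · rw [if_neg h0]
    push_neg at h0
    have hB : 0 < B := Nat.pos_of_ne_zero h0.1
    have hkB : k < B := lt_of_lt_of_le hk (Nat.mod_lt _ hB).le
    by_cases htop : j < A - A % B
    · rw [if_pos htop]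
      simp [Nat.mod_eq_of_lt hkB]; omega
    · rw [if_neg htop]
      push_neg at htop
      set b := A % B with hbdef
      have hbB : b < B := Nat.mod_lt _ hB
      have hb0 : 0 < b := by omega
      set r := j - (A - b) with hrdef
      have hr : r < b := by omega
      have hAeq : B * (A / B) + A % B = A := Nat.div_add_mod A B
      have hjeq : j = B * (A / B) + r := by omega
      have hjmod : j % B = r := by
        rw [hjeq, Nat.mul_add_mod]
        exact Nat.mod_eq_of_lt (lt_trans hr hbB)
      rw [hjmod] at hk
      have hq1 : 1 ≤ B / b := (Nat.one_le_div_iff hb0).2 hbB.le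
      have hw : b * (B / b) + B % b = B := Nat.div_add_mod B b
      have hble : b * 1 ≤ b * (B / b) := Nat.mul_le_mul_left b hq1
      rw [if_pos (by omega : k < B - B % b)]
      have : k % b = k := Nat.mod_eq_of_lt (by omega)
      simp [this]; omega

lemma entry_descend (A B j k : ℕ) (hB : 0 < B) (hBA : B < A)
    (hj : A - A % B ≤ j) (hk : B - B % (A % B) ≤ k) :
    airEntry A B j k =
      airEntry (A % B) (B % (A % B)) (j - (A - A % B)) (k - (B - B % (A % B))) := by
  rw [airEntry_eq, if_neg (by omega), if_neg (by omega), if_neg (by omega)]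

lemma entry_mid (A B j k : ℕ) (hB : 0 < B) (hBA : B < A)
    (hj : A - A % B ≤ j) (hk : k < B - B % (A % B)) :
    airEntry A B j k = decide (k % (A % B) = j - (A - A % B)) := by
  rw [airEntry_eq, if_neg (by omega), if_neg (by omega), if_pos hk]

lemma dright_descend (A B j k : ℕ) (hB : 0 < B) (hBA : B < A)
    (hj : A - A % B ≤ j) (hk : B - B % (A % B) ≤ k) :
    dright A B j k =
      dright (A % B) (B % (A % B)) (j - (A - A % B)) (k - (B - B % (A % B))) := by
  unfold dright
  congr 1
  ext t
  simp only [Set.mem_setOf_eq]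
  have hBB : B % (A % B) ≤ B := Nat.mod_le _ _
  constructor
  · rintro ⟨ht, hlt, he⟩
    refine ⟨ht, by omega, ?_⟩
    rw [entry_descend A B j (k + t) hB hBA hj (by omega)] at he
    have harg : k + t - (B - B % (A % B)) = k - (B - B % (A % B)) + t := by omega
    rw [harg] at he
    exact he
  · rintro ⟨ht, hlt, he⟩
    refine ⟨ht, by omega, ?_⟩
    rw [entry_descend A B j (k + t) hB hBA hj (by omega)]
    have harg : k + t - (B - B % (A % B)) = k - (B - B % (A % B)) + t := by omega
    rw [harg]
    exact he

/-- the base computation: the entry sits in the last block of the middle band. -/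
lemma base_case (A B j k c d : ℕ) (hB : 0 < B) (hBA : B < A)
    (hb : 0 < A % B) (hs : 0 < B % (A % B))
    (hj1 : A - A % B ≤ j) (hj2 : j < A)
    (hk1 : B - B % (A % B) - A % B ≤ k) (hk2 : k < B - B % (A % B))
    (he : airEntry A B j k = true)
    (hc : j - (A - A % B) = c * (B % (A % B)) + d) (hd : d < B % (A % B)) :
    dright A B j k = A % B - c * (B % (A % B)) := by
  have hbB : A % B < B := Nat.mod_lt _ hB
  have hjRb : j - (A - A % B) < A % B := by omega
  have hq1 : 1 ≤ B / (A % B) := (Nat.one_le_div_iff hb).2 hbB.le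
  obtain ⟨q, hq⟩ : ∃ q, B / (A % B) = q + 1 := ⟨B / (A % B) - 1, by omega⟩
  have hw : (A % B) * q + (A % B) + B % (A % B) = B := by
    have h := Nat.div_add_mod B (A % B)
    rw [hq, Nat.mul_add, Nat.mul_one] at h
    omega
  have hkmod : k % (A % B) = j - (A - A % B) := by
    have h := entry_mid A B j k hB hBA hj1 hk2
    rw [he] at h
    exact of_decide_eq_true h.symm
  have hkval : k = (A % B) * q + (j - (A - A % B)) := by
    have hx : k - (A % B) * q < A % B := by omega
    have h1 : ((A % B) * q + (k - (A % B) * q)) % (A % B) = k - (A % B) * q := by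
      rw [Nat.add_comm, Nat.add_mul_mod_self_left]
      exact Nat.mod_eq_of_lt hx
    have h2 : (A % B) * q + (k - (A % B) * q) = k := by omega
    rw [h2] at h1
    omega
  have hdmod : (j - (A - A % B)) % (B % (A % B)) = d := by
    rw [hc, Nat.add_comm, Nat.add_mul_mod_self_right]
    exact Nat.mod_eq_of_lt hd
  have hCle : c * (B % (A % B)) ≤ j - (A - A % B) := by omega
  have hmem : 0 < A % B - c * (B % (A % B)) ∧
      k + (A % B - c * (B % (A % B))) < B ∧
      airEntry A B j (k + (A % B - c * (B % (A % B)))) = true := by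
    refine ⟨by omega, by omega, ?_⟩
    rw [entry_descend A B j _ hB hBA hj1 (by omega)]
    have h1 : k + (A % B - c * (B % (A % B))) - (B - B % (A % B)) = d := by omega
    rw [h1, ← hdmod]
    exact first_mem (A % B) (B % (A % B)) _ hjRb
  have hlb : ∀ t, (0 < t ∧ k + t < B ∧ airEntry A B j (k + t) = true) →
      A % B - c * (B % (A % B)) ≤ t := by
    rintro t ⟨ht, hlt, het⟩
    by_contra hcon
    push_neg at hcon
    by_cases hmid : k + t < B - B % (A % B)
    · have hh := entry_mid A B j (k + t) hB hBA hj1 hmid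
      rw [het] at hh
      have hmod : (k + t) % (A % B) = j - (A - A % B) := of_decide_eq_true hh.symm
      have h2 : j - (A - A % B) + t < A % B := by omega
      have h1 : ((A % B) * q + (j - (A - A % B) + t)) % (A % B)
          = j - (A - A % B) + t := by
        rw [Nat.add_comm, Nat.add_mul_mod_self_left]
        exact Nat.mod_eq_of_lt h2
      have h3 : (A % B) * q + (j - (A - A % B) + t) = k + t := by omega
      rw [h3] at h1
      omega
    · push_neg at hmid
      have hdes := entry_descend A B j (k + t) hB hBA hj1 hmid
      rw [het] at hdes
      have hu : k + t - (B - B % (A % B)) < d := by omega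
      have hfm := first_min (A % B) (B % (A % B)) (j - (A - A % B))
          (k + t - (B - B % (A % B))) hjRb (by rw [hdmod]; exact hu)
      rw [← hdes] at hfm
      simp at hfm
  have h1 : sInf {t : ℕ | 0 < t ∧ k + t < B ∧ airEntry A B j (k + t) = true}
      ≤ A % B - c * (B % (A % B)) :=
    csInf_le (OrderBot.bddBelow _) hmem
  have h2 : A % B - c * (B % (A % B))
      ≤ sInf {t : ℕ | 0 < t ∧ k + t < B ∧ airEntry A B j (k + t) = true} :=
    le_csInf ⟨_, hmem⟩ fun t ht => hlb t ht
  show sInf {t : ℕ | 0 < t ∧ k + t < B ∧ airEntry A B j (k + t) = true} = _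
  omega

/-- the iterated matrix parameters. -/
def matIter (A B : ℕ) : ℕ → ℕ × ℕ
  | 0 => (A, B)
  | m + 1 =>
    ((matIter A B m).1 % (matIter A B m).2,
      (matIter A B m).2 % ((matIter A B m).1 % (matIter A B m).2))

lemma matIter_shift (A B p : ℕ) :
    matIter A B (p + 1) = matIter (A % B) (B % (A % B)) p := by
  induction p with
  | zero => rfl
  | succ p ih => rw [matIter, ih]; rfl

lemma matIter_fst_le (A B p : ℕ) : (matIter A B (p + 1)).1 ≤ (matIter A B p).1 :=
  le_trans (Nat.mod_le _ _) le_rfl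

lemma matIter_snd_le (A B p : ℕ) : (matIter A B (p + 1)).2 ≤ (matIter A B p).2 :=
  Nat.mod_le _ _

lemma matIter_fst_mono (A B : ℕ) {p q : ℕ} (h : p ≤ q) :
    (matIter A B q).1 ≤ (matIter A B p).1 := by
  induction q with
  | zero =>
    have : p = 0 := Nat.le_zero.1 h
    subst this; exact le_rfl
  | succ q ih =>
    rcases Nat.eq_or_lt_of_le h with rfl | h'
    · exact le_rfl
    · exact le_trans (matIter_fst_le A B q) (ih (by omega))

lemma matIter_snd_mono (A B : ℕ) {p q : ℕ} (h : p ≤ q) :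
    (matIter A B q).2 ≤ (matIter A B p).2 := by
  induction q with
  | zero =>
    have : p = 0 := Nat.le_zero.1 h
    subst this; exact le_rfl
  | succ q ih =>
    rcases Nat.eq_or_lt_of_le h with rfl | h'
    · exact le_rfl
    · exact le_trans (matIter_snd_le A B q) (ih (by omega))

/-- Main inductive lemma. -/
lemma main_lemma (m : ℕ) : ∀ A B j k c d : ℕ,
    (∀ p, p ≤ m + 1 → 0 < (matIter A B p).1 ∧ 0 < (matIter A B p).2) →
    B < A →
    A - (matIter A B (m + 1)).1 ≤ j → j < A →
    j - (A - (matIter A B (m + 1)).1) = c * (matIter A B (m + 1)).2 + d →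
    d < (matIter A B (m + 1)).2 →
    B - (matIter A B (m + 1)).2 - (matIter A B (m + 1)).1 ≤ k →
    k < B - (matIter A B (m + 1)).2 →
    airEntry A B j k = true →
    dright A B j k = (matIter A B (m + 1)).1 - c * (matIter A B (m + 1)).2 := by
  induction m with
  | zero =>
    intro A B j k c d hchain hBA hj1 hj2 hc hd hk1 hk2 he
    have h0 := hchain 0 (by omega)
    have h1 := hchain 1 (by omega)
    exact base_case A B j k c d h0.2 hBA h1.1 h1.2 hj1 hj2 hk1 hk2 he hc hd
  | succ m ih =>
    intro A B j k c d hchain hBA hj1 hj2 hc hd hk1 hk2 he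
    have h0 := hchain 0 (by omega)
    have h1 := hchain 1 (by omega)
    have hB : 0 < B := h0.2
    have hA' : 0 < A % B := by
      have : (matIter A B 1).1 = A % B := rfl
      rw [this] at h1; exact h1.1
    have hB' : 0 < B % (A % B) := by
      have : (matIter A B 1).2 = B % (A % B) := rfl
      rw [this] at h1; exact h1.2
    set b := (matIter A B (m + 2)).1 with hbdef
    set s := (matIter A B (m + 2)).2 with hsdef
    -- b ≤ A₁ = A % B
    have hbA1 : b ≤ A % B := by
      have := matIter_fst_mono A B (show 1 ≤ m + 2 by omega)
      exact this
    -- s + b ≤ B_{m+1} ≤ B₁ = B % (A % B)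
    have hBm1pos := (hchain (m + 1) (by omega)).2
    have hAm2posv := hchain (m + 2) (by omega)
    have hsb : s + b ≤ (matIter A B (m + 1)).2 := by
      have hblt : b < (matIter A B (m + 1)).2 := by
        show (matIter A B (m + 2)).1 < _
        exact Nat.mod_lt _ hBm1pos
      have hseq : s = (matIter A B (m + 1)).2 % b := rfl
      have hw : b * ((matIter A B (m + 1)).2 / b) + s = (matIter A B (m + 1)).2 := by
        rw [hseq]; exact Nat.div_add_mod _ _
      have hq1 : 1 ≤ (matIter A B (m + 1)).2 / b :=
        (Nat.one_le_div_iff hAm2posv.1).2 hblt.le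
      have := Nat.mul_le_mul_left b hq1
      omega
    have hB1 : (matIter A B (m + 1)).2 ≤ B % (A % B) := by
      have := matIter_snd_mono A B (show 1 ≤ m + 1 by omega)
      exact this
    have hsbB' : s + b ≤ B % (A % B) := le_trans hsb hB1
    have hAmodlt : A % B < B := Nat.mod_lt _ hB
    have hBmod : B % (A % B) ≤ B := Nat.mod_le _ _
    -- descend one level
    have hjd : A - A % B ≤ j := by omega
    have hkd : B - B % (A % B) ≤ k := by omega
    rw [dright_descend A B j k hB hBA hjd hkd]
    rw [entry_descend A B j k hB hBA hjd hkd] at he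
    have hshift : ∀ p, matIter A B (p + 1) = matIter (A % B) (B % (A % B)) p :=
      fun p => matIter_shift A B p
    have hb' : b = (matIter (A % B) (B % (A % B)) (m + 1)).1 := by rw [← hshift]
    have hs' : s = (matIter (A % B) (B % (A % B)) (m + 1)).2 := by rw [← hshift]
    rw [hb', hs']
    apply ih (A % B) (B % (A % B)) (j - (A - A % B)) (k - (B - B % (A % B))) c d
    · intro p hp
      rw [← hshift p]
      exact hchain (p + 1) (by omega)
    · exact Nat.mod_lt _ hA'
    · rw [← hb']; omega
    · omega
    · rw [← hb', ← hs']
      have : j - (A - A % B) - (A % B - b) = j - (A - b) := by omega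
      rw [this]; exact hc
    · rw [← hs']; exact hd
    · rw [← hb', ← hs']; omega
    · rw [← hs']; omega
    · exact he

/-! ### facts about the λ chain -/

lemma lam_zero (K D : ℕ) : lam K D 0 = D := rfl
lemma lamS_zero (K D : ℕ) : lamS K D 0 = K - D := rfl
lemma lamS_succ (K D p : ℕ) : lamS K D (p + 1) = lam K D p := rfl

lemma lam_succ (K D p : ℕ) (h : lam K D p ≠ 0) :
    lam K D (p + 1) = lamS K D p % lam K D p := by
  have h' : (lamPair K D p).2 ≠ 0 := h
  show (lamPair K D (p + 1)).2 = (lamPair K D p).1 % (lamPair K D p).2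
  rw [lamPair]
  simp only [if_neg h']

lemma lam_succ_zero (K D p : ℕ) (h : lam K D p = 0) : lam K D (p + 1) = 0 := by
  simp only [lam, lamPair]
  rw [show (lamPair K D p).2 = 0 from h]
  simp

lemma lam_succ_le (K D p : ℕ) : lam K D (p + 1) ≤ lam K D p := by
  by_cases h : lam K D p = 0
  · rw [lam_succ_zero K D p h]; omega
  · rw [lam_succ K D p h]
    exact (Nat.mod_lt _ (Nat.pos_of_ne_zero h)).le

lemma lam_mono (K D : ℕ) {p q : ℕ} (h : p ≤ q) : lam K D q ≤ lam K D p := by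
  induction q with
  | zero =>
    have : p = 0 := Nat.le_zero.1 h
    subst this; exact le_rfl
  | succ q ih =>
    rcases Nat.eq_or_lt_of_le h with rfl | h'
    · exact le_rfl
    · exact le_trans (lam_succ_le K D q) (ih (by omega))

lemma lam_succ_lt (K D p : ℕ) (h : lam K D p ≠ 0) :
    lam K D (p + 1) < lam K D p := by
  rw [lam_succ K D p h]
  exact Nat.mod_lt _ (Nat.pos_of_ne_zero h)

lemma lamS_decomp (K D p : ℕ) (h : lam K D p ≠ 0) :
    lamS K D p = beta K D p * lam K D p + lam K D (p + 1) := by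
  rw [lam_succ K D p h]
  have h2 := Nat.div_add_mod (lamS K D p) (lam K D p)
  have h3 : beta K D p * lam K D p = lam K D p * (lamS K D p / lam K D p) := by
    rw [Nat.mul_comm]; rfl
  omega


/-- Shared final glue: once the matIter chain is matched with the λ chain. -/
lemma glue (K D l i m j k c d : ℕ) (hD : 0 < D) (hDK : D < K)
    (hmin : ∀ p ≤ l, lam K D p ≠ 0) (h2i2 : 2 * i + 2 ≤ l)
    (hj1 : K - lam K D (2 * i) ≤ j) (hj2 : j < K)
    (hk1 : K - D - lamS K D (2 * i) ≤ k)
    (hk2 : k < K - D - lamS K D (2 * i) + beta K D (2 * i) * lam K D (2 * i))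
    (he : airEntry K (K - D) j k = true)
    (hkR : (beta K D (2 * i) - 1) * lam K D (2 * i) ≤ k % (K - D - lamS K D (2 * i)))
    (hjR : j % (K - lam K D (2 * i)) = c * lam K D (2 * i + 1) + d)
    (hd : d < lam K D (2 * i + 1))
    (hfin : matIter K (K - D) (m + 1) = (lam K D (2 * i), lam K D (2 * i + 1)))
    (hchain : ∀ p, p ≤ m + 1 →
      0 < (matIter K (K - D) p).1 ∧ 0 < (matIter K (K - D) p).2)
    (hN1 : lam K D (2 * i) ≤ lamS K D (2 * i))
    (hN2 : 2 * lam K D (2 * i) ≤ K)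
    (hN3 : lamS K D (2 * i) < K - D →
      2 * lamS K D (2 * i) ≤ (K - D) + lam K D (2 * i + 1))
    (hΛn : lamS K D (2 * i) ≤ K - D) :
    dright K (K - D) j k = lam K D (2 * i) - c * lam K D (2 * i + 1) := by
  have hb_pos : 0 < lam K D (2 * i) := Nat.pos_of_ne_zero (hmin _ (by omega))
  have hs_pos : 0 < lam K D (2 * i + 1) := Nat.pos_of_ne_zero (hmin _ (by omega))
  have hdec : lamS K D (2 * i) = beta K D (2 * i) * lam K D (2 * i) + lam K D (2 * i + 1) :=
    lamS_decomp K D (2 * i) (hmin _ (by omega))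
  have hβprod : lam K D (2 * i) ≤ beta K D (2 * i) * lam K D (2 * i) := by
    have h1 : 1 ≤ beta K D (2 * i) := (Nat.one_le_div_iff hb_pos).2 hN1
    calc lam K D (2 * i) = 1 * lam K D (2 * i) := (Nat.one_mul _).symm
      _ ≤ _ := Nat.mul_le_mul_right _ h1
  have hsubmul : (beta K D (2 * i) - 1) * lam K D (2 * i)
      = beta K D (2 * i) * lam K D (2 * i) - lam K D (2 * i) := by
    rw [Nat.sub_mul, Nat.one_mul]
  rw [hsubmul] at hkR
  -- convert the row hypothesis
  have hjR' : j - (K - lam K D (2 * i)) = c * lam K D (2 * i + 1) + d := by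
    have h1 : j - (K - lam K D (2 * i)) < K - lam K D (2 * i) := by omega
    have h2 : j = (K - lam K D (2 * i)) + (j - (K - lam K D (2 * i))) := by omega
    have h3 : ((K - lam K D (2 * i)) + (j - (K - lam K D (2 * i))))
        % (K - lam K D (2 * i)) = j - (K - lam K D (2 * i)) := by
      rw [Nat.add_mod_left]
      exact Nat.mod_eq_of_lt h1
    rw [← h2] at h3
    rw [← h3]
    exact hjR
  -- convert the column hypotheses
  have hkR' : K - D - lam K D (2 * i + 1) - lam K D (2 * i) ≤ k
      ∧ k < K - D - lam K D (2 * i + 1) := by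
    by_cases ha : K - D - lamS K D (2 * i) = 0
    · rw [ha, Nat.mod_zero] at hkR
      constructor <;> omega
    · have h2a := hN3 (by omega)
      have hklt : k < 2 * (K - D - lamS K D (2 * i)) := by omega
      have h2 : k = (K - D - lamS K D (2 * i)) + (k - (K - D - lamS K D (2 * i))) := by
        omega
      have h3 : ((K - D - lamS K D (2 * i)) + (k - (K - D - lamS K D (2 * i))))
          % (K - D - lamS K D (2 * i)) = k - (K - D - lamS K D (2 * i)) := by
        rw [Nat.add_mod_left]
        exact Nat.mod_eq_of_lt (by omega)
      rw [← h2] at h3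
      rw [h3] at hkR
      constructor <;> omega
  have hres := main_lemma m K (K - D) j k c d hchain (by omega)
    (by rw [hfin]; exact hj1) hj2
    (by rw [hfin]; exact hjR') (by rw [hfin]; exact hd)
    (by rw [hfin]; exact hkR'.1) (by rw [hfin]; exact hkR'.2) he
  rw [hfin] at hres
  exact hres

end AirAux

open AirAux in
/-- Lemma 3 (case ii): right-distance of an entry of the even submatrix whose
within-block column index lies in [(β_{2i}−1)λ_{2i}, β_{2i}λ_{2i} − 1] and
within-block row index is j_R = cλ_{2i+1} + d equals λ_{2i} − cλ_{2i+1}. -/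
theorem stmt9 (K D l i j k c d : ℕ) (hD : 0 < D) (hDK : D < K)
    (hl : lam K D (l + 1) = 0) (hmin : ∀ j ≤ l, lam K D j ≠ 0)
    (hi : i + 1 ≤ l / 2)
    (hj1 : K - lam K D (2 * i) ≤ j) (hj2 : j < K)
    (hk1 : K - D - lamS K D (2 * i) ≤ k)
    (hk2 : k < K - D - lamS K D (2 * i) + beta K D (2 * i) * lam K D (2 * i))
    (he : airEntry K (K - D) j k = true)
    (hkR : (beta K D (2 * i) - 1) * lam K D (2 * i) ≤ k % (K - D - lamS K D (2 * i)))
    (hjR : j % (K - lam K D (2 * i)) = c * lam K D (2 * i + 1) + d)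
    (hd : d < lam K D (2 * i + 1)) :
    dright K (K - D) j k = lam K D (2 * i) - c * lam K D (2 * i + 1) := by
  have h2i2 : 2 * i + 2 ≤ l := by omega
  have hposl : ∀ p, p ≤ l → 0 < lam K D p := fun p hp => Nat.pos_of_ne_zero (hmin p hp)
  have e0 : lam K D 0 = D := rfl
  have eS0 : lamS K D 0 = K - D := rfl
  have hlam1 : lam K D 1 = (K - D) % D := lam_succ K D 0 (hmin 0 (by omega))
  have hDn : D ≠ K - D := by
    intro h
    have h1 : lam K D 1 = 0 := by
      rw [hlam1, ← h, Nat.mod_self]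
    exact hmin 1 (by omega) h1
  have hdec0 : lamS K D 0 = beta K D 0 * lam K D 0 + lam K D 1 :=
    lamS_decomp K D 0 (hmin 0 (by omega))
  rcases Nat.lt_or_ge D (K - D) with hcase | hcase'
  · -- regime 1 : D < K - D, take m = i
    have corr : ∀ p, p ≤ i →
        matIter K (K - D) (p + 1) = (lam K D (2 * p), lam K D (2 * p + 1)) := by
      intro p
      induction p with
      | zero =>
        intro _
        have e2 : K % (K - D) = D := by
          have h := Nat.add_mod_left (K - D) D
          rw [show (K - D) + D = K by omega] at h
          rw [h]
          exact Nat.mod_eq_of_lt hcase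
        have e1 : matIter K (K - D) (0 + 1)
            = (K % (K - D), (K - D) % (K % (K - D))) := rfl
        rw [e1, e2]
        have h1' : lam K D (2 * 0 + 1) = (K - D) % D := lam_succ K D 0 (hmin 0 (by omega))
        rw [h1']
        rfl
      | succ p ihp =>
        intro hp
        have hprev := ihp (by omega)
        have estep : matIter K (K - D) (p + 1 + 1) =
            ((matIter K (K - D) (p + 1)).1 % (matIter K (K - D) (p + 1)).2,
              (matIter K (K - D) (p + 1)).2
                % ((matIter K (K - D) (p + 1)).1 % (matIter K (K - D) (p + 1)).2)) := rfl
        rw [estep, hprev]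
        have ha : lam K D (2 * p) % lam K D (2 * p + 1) = lam K D (2 * p + 2) :=
          (lam_succ K D (2 * p + 1) (hmin _ (by omega))).symm
        have hb2 : lam K D (2 * p + 1) % lam K D (2 * p + 2) = lam K D (2 * p + 3) :=
          (lam_succ K D (2 * p + 2) (hmin _ (by omega))).symm
        show (lam K D (2 * p) % lam K D (2 * p + 1),
            lam K D (2 * p + 1) % (lam K D (2 * p) % lam K D (2 * p + 1)))
          = (lam K D (2 * (p + 1)), lam K D (2 * (p + 1) + 1))
        rw [ha, hb2]
        rfl
    have hfin := corr i le_rfl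
    have hchain : ∀ p, p ≤ i + 1 →
        0 < (matIter K (K - D) p).1 ∧ 0 < (matIter K (K - D) p).2 := by
      intro p hp
      cases p with
      | zero => exact ⟨show 0 < K by omega, show 0 < K - D by omega⟩
      | succ q =>
        rw [corr q (by omega)]
        exact ⟨hposl _ (by omega), hposl _ (by omega)⟩
    have hmono0 : lam K D (2 * i) ≤ lam K D 0 := lam_mono K D (by omega)
    have hΛ : i = 0 ∨ (1 ≤ i ∧ lamS K D (2 * i) = lam K D (2 * i - 1)) := by
      rcases Nat.eq_zero_or_pos i with h | h
      · exact Or.inl h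
      · refine Or.inr ⟨h, ?_⟩
        rw [show 2 * i = (2 * i - 1) + 1 by omega]
        rfl
    have hΛ1 : lamS K D (2 * i) ≤ lam K D 1 ∨ lamS K D (2 * i) = K - D := by
      rcases hΛ with h | h
      · subst h; exact Or.inr rfl
      · refine Or.inl ?_
        rw [h.2]
        exact lam_mono K D (by omega)
    have hΛn : lamS K D (2 * i) ≤ K - D := by
      have hl1 : lam K D 1 ≤ K - D := by
        rw [hlam1]; exact Nat.mod_le _ _
      rcases hΛ1 with h | h <;> omega
    have hN1 : lam K D (2 * i) ≤ lamS K D (2 * i) := by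
      rcases hΛ with h | h
      · subst h
        calc lam K D (2 * 0) ≤ D := hmono0
          _ ≤ K - D := hcase.le
          _ = lamS K D (2 * 0) := rfl
      · rw [h.2]
        exact lam_mono K D (by omega)
    have hN2 : 2 * lam K D (2 * i) ≤ K := by omega
    have hN3 : lamS K D (2 * i) < K - D →
        2 * lamS K D (2 * i) ≤ (K - D) + lam K D (2 * i + 1) := by
      intro hlt
      have hl1 : lam K D 1 < lam K D 0 := lam_succ_lt K D 0 (hmin 0 (by omega))
      have hβ0 : D ≤ beta K D 0 * lam K D 0 := by
        have h1 : 1 ≤ beta K D 0 :=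
          (Nat.one_le_div_iff (show 0 < lam K D 0 from hD)).2
            (show lam K D 0 ≤ lamS K D 0 from hcase.le)
        calc D = 1 * lam K D 0 := by rw [Nat.one_mul]; rfl
          _ ≤ _ := Nat.mul_le_mul_right _ h1
      rcases hΛ1 with h | h <;> omega
    exact glue K D l i i j k c d hD hDK hmin h2i2 hj1 hj2 hk1 hk2 he hkR hjR hd
      hfin hchain hN1 hN2 hN3 hΛn
  · -- regime 2 : K - D < D
    have hDgt : K - D < D := by omega
    have hlam1' : lam K D 1 = K - D := by
      rw [hlam1]
      exact Nat.mod_eq_of_lt hDgt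
    rcases Nat.eq_zero_or_pos i with rfl | hi1
    · exfalso
      have hβ0 : beta K D (2 * 0) = 0 := Nat.div_eq_of_lt hDgt
      have hβz : beta K D (2 * 0) * lam K D (2 * 0) = 0 := by
        rw [hβ0, Nat.zero_mul]
      have hS : lamS K D (2 * 0) = K - D := rfl
      omega
    · -- i ≥ 1, take m = i - 1
      have hlam2 : lam K D 2 = D % (K - D) := by
        have := lam_succ K D 1 (hmin 1 (by omega))
        rw [this, hlam1']
        rfl
      have corr2 : ∀ p, p ≤ i - 1 →
          matIter K (K - D) (p + 1) = (lam K D (2 * p + 2), lam K D (2 * p + 3)) := by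
        intro p
        induction p with
        | zero =>
          intro _
          have e2 : K % (K - D) = D % (K - D) := by
            have h := Nat.add_mod_left (K - D) D
            rw [show (K - D) + D = K by omega] at h
            rw [h]
          have e1 : matIter K (K - D) (0 + 1)
              = (K % (K - D), (K - D) % (K % (K - D))) := rfl
          rw [e1, e2, ← hlam2]
          have h3' : lam K D (2 * 0 + 3) = (K - D) % lam K D 2 := by
            have := lam_succ K D 2 (hmin 2 (by omega))
            rw [this]
            show lam K D 1 % lam K D 2 = (K - D) % lam K D 2
            rw [hlam1']
          rw [h3']
        | succ p ihp =>
          intro hp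
          have hprev := ihp (by omega)
          have estep : matIter K (K - D) (p + 1 + 1) =
              ((matIter K (K - D) (p + 1)).1 % (matIter K (K - D) (p + 1)).2,
                (matIter K (K - D) (p + 1)).2
                  % ((matIter K (K - D) (p + 1)).1 % (matIter K (K - D) (p + 1)).2)) := rfl
          rw [estep, hprev]
          have ha : lam K D (2 * p + 2) % lam K D (2 * p + 3) = lam K D (2 * p + 4) :=
            (lam_succ K D (2 * p + 3) (hmin _ (by omega))).symm
          have hb2 : lam K D (2 * p + 3) % lam K D (2 * p + 4) = lam K D (2 * p + 5) :=
            (lam_succ K D (2 * p + 4) (hmin _ (by omega))).symm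
          show (lam K D (2 * p + 2) % lam K D (2 * p + 3),
              lam K D (2 * p + 3) % (lam K D (2 * p + 2) % lam K D (2 * p + 3)))
            = (lam K D (2 * (p + 1) + 2), lam K D (2 * (p + 1) + 3))
          rw [ha, hb2]
          rfl
      have hfin : matIter K (K - D) ((i - 1) + 1)
          = (lam K D (2 * i), lam K D (2 * i + 1)) := by
        have h := corr2 (i - 1) le_rfl
        rw [show 2 * (i - 1) + 2 = 2 * i by omega,
          show 2 * (i - 1) + 3 = 2 * i + 1 by omega] at h
        exact h
      have hchain : ∀ p, p ≤ (i - 1) + 1 →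
          0 < (matIter K (K - D) p).1 ∧ 0 < (matIter K (K - D) p).2 := by
        intro p hp
        cases p with
        | zero => exact ⟨show 0 < K by omega, show 0 < K - D by omega⟩
        | succ q =>
          rw [corr2 q (by omega)]
          exact ⟨hposl _ (by omega), hposl _ (by omega)⟩
      have hΛeq : lamS K D (2 * i) = lam K D (2 * i - 1) := by
        rw [show 2 * i = (2 * i - 1) + 1 by omega]
        rfl
      have hΛ1 : lamS K D (2 * i) ≤ lam K D 1 := by
        rw [hΛeq]
        exact lam_mono K D (by omega)
      have hΛn : lamS K D (2 * i) ≤ K - D := by omega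
      have hN1 : lam K D (2 * i) ≤ lamS K D (2 * i) := by
        rw [hΛeq]
        exact lam_mono K D (by omega)
      have hN2 : 2 * lam K D (2 * i) ≤ K := by
        have h1 : lam K D (2 * i) ≤ lam K D 2 := lam_mono K D (by omega)
        have h2 : lam K D 2 < lam K D 1 := lam_succ_lt K D 1 (hmin 1 (by omega))
        omega
      have hN3 : lamS K D (2 * i) < K - D →
          2 * lamS K D (2 * i) ≤ (K - D) + lam K D (2 * i + 1) := by
        intro hlt
        rcases Nat.lt_or_ge i 2 with h2 | h2
        · exfalso
          have : i = 1 := by omega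
          subst this
          rw [hΛeq] at hlt
          rw [show 2 * 1 - 1 = 1 by omega, hlam1'] at hlt
          omega
        · have hx1 : lamS K D (2 * i) ≤ lam K D 3 := by
            rw [hΛeq]
            exact lam_mono K D (by omega)
          have hdec2 : lamS K D 2 = beta K D 2 * lam K D 2 + lam K D 3 :=
            lamS_decomp K D 2 (hmin 2 (by omega))
          have hS2 : lamS K D 2 = lam K D 1 := rfl
          have hl23 : lam K D 3 < lam K D 2 := lam_succ_lt K D 2 (hmin 2 (by omega))
          have hβ2 : lam K D 2 ≤ beta K D 2 * lam K D 2 := by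
            have hb1 : 1 ≤ beta K D 2 := by
              have hx : lam K D 2 ≤ lamS K D 2 := by
                have hx2 : lamS K D 2 = lam K D 1 := rfl
                rw [hx2]
                exact lam_succ_le K D 1
              exact (Nat.one_le_div_iff (hposl 2 (by omega))).2 hx
            calc lam K D 2 = 1 * lam K D 2 := (Nat.one_mul _).symm
              _ ≤ _ := Nat.mul_le_mul_right _ hb1
          omega
      exact glue K D l i (i - 1) j k c d hD hDK hmin h2i2 hj1 hj2 hk1 hk2 he hkR hjR hd
        hfin hchain hN1 hN2 hN3 hΛn
end

section
/- For the one-sided SNC-SUICP with K messages and side-information size D ≤ K−2, where receiver R_k demands x_k and knows {x_{k+1},...,x_{k+D}} (indices mod K), the minimum length of a scalar linear index code over any field F_q is exactly K − D; equivalently the minrank of the side-information graph is K − D. -/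
open Finset

namespace Stmt10Aux

variable {F : Type} [Field F]

/-- `K`-periodic sequences of vectors in `F^N` with all `N`-windows linearly independent. -/
def GoodSeq (F : Type) [Field F] (K N : ℕ) : Prop :=
  ∃ g : ℕ → (Fin N → F),
    (∀ j, g (j + K) = g j) ∧ ∀ k : ℕ, LinearIndependent F (fun t : Fin N => g (k + (t : ℕ)))

lemma periodic_mod {α : Type*} {K : ℕ} (hK : 0 < K) (g : ℕ → α) (h : ∀ j, g (j + K) = g j) :
    ∀ j, g j = g (j % K) := by
  intro j
  induction j using Nat.strong_induction_on with
  | _ j ih =>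
    rcases lt_or_ge j K with hj | hj
    · rw [Nat.mod_eq_of_lt hj]
    · have h1 : j - K + K = j := by omega
      calc g j = g (j - K + K) := by rw [h1]
        _ = g (j - K) := h _
        _ = g ((j - K) % K) := ih _ (by omega)
        _ = g ((j - K + K) % K) := by rw [Nat.add_mod_right]
        _ = g (j % K) := by rw [h1]

lemma shift_inj {N : ℕ} (hN : 0 < N) (u : ℕ) :
    Function.Injective (fun t : Fin N => (⟨(u + (t : ℕ)) % N, Nat.mod_lt _ hN⟩ : Fin N)) := by
  intro a b hab
  have h1 : (u + (a : ℕ)) % N = (u + (b : ℕ)) % N := congrArg Fin.val hab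
  have h2 : (a : ℕ) % N = (b : ℕ) % N := Nat.ModEq.add_left_cancel' u h1
  rw [Nat.mod_eq_of_lt a.isLt, Nat.mod_eq_of_lt b.isLt] at h2
  exact Fin.ext h2

lemma shift_bij {N : ℕ} (hN : 0 < N) (u : ℕ) :
    Function.Bijective (fun t : Fin N => (⟨(u + (t : ℕ)) % N, Nat.mod_lt _ hN⟩ : Fin N)) :=
  Finite.injective_iff_bijective.mp (shift_inj hN u)

lemma li_shift {N : ℕ} (hN : 0 < N) {v : Fin N → (Fin N → F)}
    (hv : LinearIndependent F v) (u : ℕ) :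
    LinearIndependent F (fun t : Fin N => v ⟨(u + (t : ℕ)) % N, Nat.mod_lt _ hN⟩) :=
  hv.comp _ (shift_inj hN u)

lemma li_single (n : ℕ) :
    LinearIndependent F (fun i : Fin n => (Pi.single i 1 : Fin n → F)) := by
  rw [Fintype.linearIndependent_iff]
  intro c hc i
  have h1 := congrFun hc i
  simpa [Finset.sum_apply, Pi.single_apply] using h1

lemma goodSeq_self (N : ℕ) (hN : 0 < N) : GoodSeq F N N := by
  refine ⟨fun j => Pi.single (⟨j % N, Nat.mod_lt _ hN⟩ : Fin N) 1, ?_, ?_⟩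
  · intro j
    simp [Nat.add_mod_right]
  · intro k
    exact li_shift hN (li_single N) k

lemma goodSeq_add {K N : ℕ} (hN : 0 < N) (hNK : N ≤ K) (h : GoodSeq F K N) :
    GoodSeq F (K + N) N := by
  obtain ⟨g, hper, hind⟩ := h
  have hK : 0 < K := lt_of_lt_of_le hN hNK
  have hmod : ∀ j, g j = g (j % K) := periodic_mod hK g hper
  set M := K + N with hM
  have hM0 : 0 < M := by omega
  set f : ℕ → Fin N → F := fun r => if r < K then g r else g (r - K) with hf
  refine ⟨fun j => f (j % M), ?_, ?_⟩
  · intro j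
    simp only [Nat.add_mod_right]
  · intro k
    have hred : (fun t : Fin N => f ((k + (t : ℕ)) % M))
        = fun t : Fin N => f ((k % M + (t : ℕ)) % M) := by
      funext t; rw [Nat.mod_add_mod]
    show LinearIndependent F (fun t : Fin N => f ((k + (t : ℕ)) % M))
    rw [hred]
    set k' := k % M with hk'
    have hk'M : k' < M := Nat.mod_lt _ hM0
    rcases lt_or_ge k' K with hcase | hcase
    · have heq : (fun t : Fin N => f ((k' + (t : ℕ)) % M)) = fun t : Fin N => g (k' + (t : ℕ)) := by
        funext t
        have hlt : k' + (t : ℕ) < M := by omega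
        rw [Nat.mod_eq_of_lt hlt, hf]
        by_cases h2 : k' + (t : ℕ) < K
        · simp [h2]
        · simp only [h2, if_false]
          have h3 : k' + (t : ℕ) - K + K = k' + (t : ℕ) := by omega
          rw [← hper (k' + (t : ℕ) - K), h3]
      rw [heq]
      exact hind k'
    · set u := k' - K with hu
      have hu' : u < N := by omega
      have heq : (fun t : Fin N => f ((k' + (t : ℕ)) % M))
          = fun t : Fin N => (fun i : Fin N => g (i : ℕ)) ⟨(u + (t : ℕ)) % N, Nat.mod_lt _ hN⟩ := by
        funext t
        simp only
        rcases lt_or_ge (u + (t : ℕ)) N with h2 | h2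
        · have e1 : k' + (t : ℕ) = K + (u + (t : ℕ)) := by omega
          have e2 : K + (u + (t : ℕ)) < M := by omega
          rw [e1, Nat.mod_eq_of_lt e2, hf]
          simp only [Nat.add_sub_cancel_left, add_lt_iff_neg_left, Nat.not_lt_zero, if_false]
          rw [Nat.mod_eq_of_lt h2]
        · have e1 : k' + (t : ℕ) = M + (u + (t : ℕ) - N) := by omega
          have e2 : u + (t : ℕ) - N < N := by omega
          have e3 : u + (t : ℕ) - N < K := by omega
          have e3M : u + (t : ℕ) - N < M := by omega
          rw [e1, Nat.add_mod_left, Nat.mod_eq_of_lt e3M, hf]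
          simp only [e3, if_true]
          have e4 : (u + (t : ℕ)) % N = u + (t : ℕ) - N := by
            rw [Nat.mod_eq_sub_mod h2, Nat.mod_eq_of_lt e2]
          rw [e4]
      rw [heq]
      refine li_shift hN (v := fun i : Fin N => g (i : ℕ)) ?_ u
      have := hind 0
      simpa using this

/-- The linear map `x ↦ (i ↦ ∑ j, x j * g j i)`. -/
def seqMap (K : ℕ) {N : ℕ} (g : ℕ → Fin N → F) : (Fin K → F) →ₗ[F] (Fin N → F) where
  toFun x := fun i => ∑ j : Fin K, x j * g (j : ℕ) i
  map_add' x y := by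
    funext i
    simp [add_mul, Finset.sum_add_distrib]
  map_smul' c x := by
    funext i
    simp [Finset.mul_sum, mul_assoc]

lemma seqMap_apply (K : ℕ) {N : ℕ} (g : ℕ → Fin N → F) (x : Fin K → F) (i : Fin N) :
    seqMap K g x i = ∑ j : Fin K, x j * g (j : ℕ) i := rfl

lemma sum_fin_shift {K : ℕ} (hK : 0 < K) (k : ℕ) (f : Fin K → F) :
    ∑ j : Fin K, f j = ∑ t : Fin K, f ⟨(k + (t : ℕ)) % K, Nat.mod_lt _ hK⟩ :=
  (Fintype.sum_bijective _ (shift_bij hK k)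
    (fun t : Fin K => f ⟨(k + (t : ℕ)) % K, Nat.mod_lt _ hK⟩) f (fun _ => rfl)).symm

end Stmt10Aux

open Finset

namespace Stmt10Aux2
open Stmt10Aux

variable {F : Type} [Field F]

lemma goodSeq_dual {K d : ℕ} (hd : 0 < d) (hdK : d < K) (h : GoodSeq F K d) :
    GoodSeq F K (K - d) := by
  classical
  obtain ⟨g, hper, hind⟩ := h
  have hK : 0 < K := by omega
  have hmod := periodic_mod hK g hper
  set N := K - d with hN
  have hN0 : 0 < N := by omega
  set T : (Fin K → F) →ₗ[F] (Fin d → F) := seqMap K g with hT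
  have hsurj : Function.Surjective T := by
    intro u
    have hli : LinearIndependent F (fun t : Fin d => g (t : ℕ)) := by
      have := hind 0
      simpa using this
    have : Nonempty (Fin d) := ⟨⟨0, hd⟩⟩
    have hspan : Submodule.span F (Set.range (fun t : Fin d => g (t : ℕ))) = ⊤ :=
      hli.span_eq_top_of_card_eq_finrank (by simp)
    have hu : u ∈ Submodule.span F (Set.range (fun t : Fin d => g (t : ℕ))) := by
      rw [hspan]; trivial
    obtain ⟨c, hc⟩ := (Submodule.mem_span_range_iff_exists_fun F).mp hu
    set vn : ℕ → F := fun j => if h' : j < d then c ⟨j, h'⟩ else 0 with hvn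
    refine ⟨fun j : Fin K => vn (j : ℕ), ?_⟩
    funext s
    rw [seqMap_apply]
    rw [Fin.sum_univ_eq_sum_range (fun j => vn j * g j s) K]
    rw [← Finset.sum_subset (Finset.range_subset_range.mpr hdK.le)
      (fun x _ hx => by
        have hx' : ¬ x < d := by simpa using hx
        simp [hvn, hx'])]
    rw [← Fin.sum_univ_eq_sum_range (fun j => vn j * g j s) d]
    have heq : ∀ t : Fin d, vn (t : ℕ) * g (t : ℕ) s = c t * g (t : ℕ) s := by
      intro t
      simp [hvn, t.isLt]
    rw [Finset.sum_congr rfl (fun t _ => heq t)]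
    have := congrFun hc s
    simpa [Finset.sum_apply, Pi.smul_apply, smul_eq_mul] using this
  have hr : Module.finrank F (LinearMap.ker T) = N := by
    have h1 := LinearMap.finrank_range_add_finrank_ker T
    rw [LinearMap.range_eq_top.mpr hsurj, finrank_top] at h1
    simp only [Module.finrank_fin_fun] at h1
    omega
  let b : Module.Basis (Fin N) F (LinearMap.ker T) :=
    (Module.finBasis F (LinearMap.ker T)).reindex (finCongr hr)
  set w : Fin N → (Fin K → F) := fun s => ((b s : LinearMap.ker T) : Fin K → F) with hw
  refine ⟨fun j => fun s => w s ⟨j % K, Nat.mod_lt _ hK⟩, ?_, ?_⟩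
  · intro j
    simp only [Nat.add_mod_right]
  · intro k
    have hcols : LinearIndependent F
        (fun s : Fin N => fun t : Fin N => w s ⟨(k + (t : ℕ)) % K, Nat.mod_lt _ hK⟩) := by
      rw [Fintype.linearIndependent_iff]
      intro a ha
      set v : Fin K → F := ∑ s : Fin N, a s • w s with hv
      have hvmem : v ∈ LinearMap.ker T := by
        rw [hv]
        exact Submodule.sum_mem _ (fun s _ => Submodule.smul_mem _ _ (b s).2)
      set vnn : ℕ → F := fun m => v ⟨m % K, Nat.mod_lt _ hK⟩ with hvnn
      have hvz : ∀ t : ℕ, t < N → vnn (k + t) = 0 := by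
        intro t ht
        have h1 := congrFun ha ⟨t, ht⟩
        simp only [Finset.sum_apply, Pi.smul_apply, smul_eq_mul, Pi.zero_apply] at h1
        show v ⟨(k + t) % K, Nat.mod_lt _ hK⟩ = 0
        rw [hv]
        simpa [Finset.sum_apply, Pi.smul_apply, smul_eq_mul] using h1
      have hker : ∀ s' : Fin d, ∑ j : Fin K, v j * g (j : ℕ) s' = 0 := by
        intro s'
        have h1 : T v = 0 := LinearMap.mem_ker.mp hvmem
        exact congrFun h1 s'
      have hsecond : ∀ u : ℕ, u < d → vnn (k + N + u) = 0 := by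
        have hz : (∑ u : Fin d, vnn (k + N + (u : ℕ)) • g (k + N + (u : ℕ))) = 0 := by
          funext s'
          have h1 := hker s'
          rw [sum_fin_shift hK k (fun j : Fin K => v j * g (j : ℕ) s')] at h1
          have h2 : ∑ t : Fin K, vnn (k + (t : ℕ)) * g (k + (t : ℕ)) s' = 0 := by
            rw [← h1]
            apply Finset.sum_congr rfl
            intro t _
            rw [← hmod (k + (t : ℕ))]
          rw [Fin.sum_univ_eq_sum_range (fun m => vnn (k + m) * g (k + m) s') K] at h2
          have hsplit := Finset.sum_range_add (fun m => vnn (k + m) * g (k + m) s') N d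
          rw [show N + d = K by omega] at hsplit
          rw [hsplit] at h2
          have hfst : ∑ t ∈ Finset.range N, vnn (k + t) * g (k + t) s' = 0 :=
            Finset.sum_eq_zero (fun t ht => by
              rw [hvz t (Finset.mem_range.mp ht), zero_mul])
          rw [hfst, zero_add] at h2
          have h3 : ∑ u ∈ Finset.range d, vnn (k + N + u) * g (k + N + u) s' = 0 := by
            rw [← h2]
            apply Finset.sum_congr rfl
            intro u _
            rw [add_assoc]
          simp only [Finset.sum_apply, Pi.smul_apply, smul_eq_mul, Pi.zero_apply]
          rw [Fin.sum_univ_eq_sum_range (fun m => vnn (k + N + m) * g (k + N + m) s') d]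
          exact h3
        intro u hu
        have hli2 := hind (k + N)
        have := (Fintype.linearIndependent_iff.mp hli2)
          (fun u : Fin d => vnn (k + N + (u : ℕ))) hz ⟨u, hu⟩
        exact this
      have hvall : v = 0 := by
        funext j
        obtain ⟨t, ht⟩ := (shift_bij hK k).2 j
        have hj : v j = vnn (k + (t : ℕ)) := by rw [← ht]
        rcases lt_or_ge (t : ℕ) N with h1 | h1
        · rw [hj, hvz _ h1]; rfl  -- close 0 = 0 j
        · have h2 : (t : ℕ) - N < d := by omega
          have h3 : k + N + ((t : ℕ) - N) = k + (t : ℕ) := by omega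
          have := hsecond _ h2
          rw [h3] at this
          rw [hj, this]; rfl
      have hb0 : (∑ s : Fin N, a s • b s) = 0 := by
        have hcoe : ((∑ s : Fin N, a s • b s : LinearMap.ker T) : Fin K → F) = v := by
          rw [hv]
          push_cast
          rfl
        exact Subtype.ext (by rw [hcoe, hvall]; rfl)
      exact fun s => (Fintype.linearIndependent_iff.mp b.linearIndependent) a hb0 s
    have hMu : IsUnit (Matrix.of
        (fun t s : Fin N => w s ⟨(k + (t : ℕ)) % K, Nat.mod_lt _ hK⟩)) := by
      rw [← Matrix.linearIndependent_cols_iff_isUnit]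
      exact hcols
    have hrows := Matrix.linearIndependent_rows_iff_isUnit.mpr hMu
    exact hrows

end Stmt10Aux2

namespace Stmt10Aux3
open Stmt10Aux Stmt10Aux2

variable {F : Type} [Field F]

lemma goodSeq_all (F : Type) [Field F] :
    ∀ (n K N : ℕ), K + N ≤ n → 1 ≤ N → N ≤ K → GoodSeq F K N := by
  intro n
  induction n with
  | zero => intro K N h h1 h2; omega
  | succ n ih =>
    intro K N hn h1 h2
    rcases eq_or_lt_of_le h2 with heq | hlt
    · subst heq
      exact goodSeq_self N (by omega)
    · rcases le_or_gt (2 * N) K with h2N | h2N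
      · have hrec := ih (K - N) N (by omega) h1 (by omega)
        have hadd := goodSeq_add (by omega) (by omega) hrec
        rwa [show K - N + N = K by omega] at hadd
      · have hrec := ih K (K - N) (by omega) (by omega) (by omega)
        have hdual := goodSeq_dual (by omega) (by omega) hrec
        rwa [show K - (K - N) = N by omega] at hdual

/-- Zero-padding linear map. -/
def pad (F : Type) [Field F] (m K : ℕ) : (Fin m → F) →ₗ[F] (Fin K → F) where
  toFun y := fun j => if h' : (j : ℕ) < m then y ⟨(j : ℕ), h'⟩ else 0
  map_add' y z := by
    funext j
    by_cases h' : (j : ℕ) < m <;> simp [h']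
  map_smul' c y := by
    funext j
    by_cases h' : (j : ℕ) < m <;> simp [h']

lemma pad_apply (m K : ℕ) (y : Fin m → F) (j : Fin K) :
    pad F m K y j = if h' : (j : ℕ) < m then y ⟨(j : ℕ), h'⟩ else 0 := rfl

end Stmt10Aux3

/-- The optimal scalar linear index code length for the one-sided SNC-SUICP with K
messages and D ≤ K−2 side-information is exactly K − D, over every field. -/
theorem stmt10 (K D : ℕ) (hK : 2 ≤ K) (hD : 1 ≤ D) (hDK : D ≤ K - 2)
    (F : Type) [Field F] :
    IsLeast {N : ℕ | ∃ E : (Fin K → F) →ₗ[F] (Fin N → F),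
      ∀ k : Fin K, ∃ dec : (Fin N → F) → (Fin D → F) → F,
        ∀ x : Fin K → F,
          dec (E x) (fun t => x ⟨((k : ℕ) + 1 + (t : ℕ)) % K, Nat.mod_lt _ (by omega)⟩)
            = x k} (K - D) := by
  classical
  have hK0 : 0 < K := by omega
  have hDK' : D + 2 ≤ K := by omega
  obtain ⟨g, hper, hind⟩ :=
    Stmt10Aux3.goodSeq_all F (K + (K - D)) K (K - D) le_rfl (by omega) (by omega)
  have hmod := Stmt10Aux.periodic_mod hK0 g hper
  set E : (Fin K → F) →ₗ[F] (Fin (K - D) → F) := Stmt10Aux.seqMap K g with hE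
  have key : ∀ (k : Fin K) (x x' : Fin K → F), E x = E x' →
      (∀ t : Fin D, x ⟨((k : ℕ) + 1 + (t : ℕ)) % K, Nat.mod_lt _ (by omega)⟩
                  = x' ⟨((k : ℕ) + 1 + (t : ℕ)) % K, Nat.mod_lt _ (by omega)⟩) →
      x k = x' k := by
    intro k x x' hEx hside
    set v : Fin K → F := x - x' with hv
    have hEv : ∀ i : Fin (K - D), ∑ j : Fin K, v j * g (j : ℕ) i = 0 := by
      intro i
      have h0 : E v = 0 := by rw [hv, map_sub, hEx, sub_self]
      exact congrFun h0 i
    set vnn : ℕ → F := fun m => v ⟨m % K, Nat.mod_lt _ hK0⟩ with hvnn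
    have hvz : ∀ t, t < D → vnn ((k : ℕ) + 1 + t) = 0 := by
      intro t ht
      have h1 := hside ⟨t, ht⟩
      show v ⟨((k : ℕ) + 1 + t) % K, Nat.mod_lt _ hK0⟩ = 0
      rw [hv]
      exact sub_eq_zero_of_eq h1
    have hsum : ∀ i : Fin (K - D),
        ∑ u ∈ Finset.range (K - D), vnn ((k : ℕ) + 1 + D + u) * g ((k : ℕ) + 1 + D + u) i = 0 := by
      intro i
      have h1 := hEv i
      rw [Stmt10Aux.sum_fin_shift hK0 ((k : ℕ) + 1) (fun j : Fin K => v j * g (j : ℕ) i)] at h1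
      have h2 : ∑ t : Fin K, vnn ((k : ℕ) + 1 + (t : ℕ)) * g ((k : ℕ) + 1 + (t : ℕ)) i = 0 := by
        rw [← h1]
        apply Finset.sum_congr rfl
        intro t _
        rw [← hmod ((k : ℕ) + 1 + (t : ℕ))]
      rw [Fin.sum_univ_eq_sum_range (fun m => vnn ((k : ℕ) + 1 + m) * g ((k : ℕ) + 1 + m) i) K] at h2
      have hsplit := Finset.sum_range_add
        (fun m => vnn ((k : ℕ) + 1 + m) * g ((k : ℕ) + 1 + m) i) D (K - D)
      rw [show D + (K - D) = K by omega] at hsplit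
      rw [hsplit] at h2
      have hfst : ∑ t ∈ Finset.range D, vnn ((k : ℕ) + 1 + t) * g ((k : ℕ) + 1 + t) i = 0 :=
        Finset.sum_eq_zero (fun t ht => by rw [hvz t (Finset.mem_range.mp ht), zero_mul])
      rw [hfst, zero_add] at h2
      rw [← h2]
      apply Finset.sum_congr rfl
      intro u _
      rw [add_assoc]
    have hcoef : ∀ u : Fin (K - D), vnn ((k : ℕ) + 1 + D + (u : ℕ)) = 0 := by
      have hli := hind ((k : ℕ) + 1 + D)
      apply Fintype.linearIndependent_iff.mp hli
      funext i
      simp only [Finset.sum_apply, Pi.smul_apply, smul_eq_mul, Pi.zero_apply]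
      rw [Fin.sum_univ_eq_sum_range
        (fun m => vnn ((k : ℕ) + 1 + D + m) * g ((k : ℕ) + 1 + D + m) i) (K - D)]
      exact hsum i
    have hk0 := hcoef ⟨K - D - 1, by omega⟩
    have harg : (k : ℕ) + 1 + D + (K - D - 1) = (k : ℕ) + K := by omega
    rw [harg] at hk0
    have h5 : ((k : ℕ) + K) % K = (k : ℕ) := by
      rw [Nat.add_mod_right, Nat.mod_eq_of_lt k.isLt]
    have h6 : v k = 0 := by
      have : v ⟨((k : ℕ) + K) % K, Nat.mod_lt _ hK0⟩ = 0 := hk0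
      rwa [show (⟨((k : ℕ) + K) % K, Nat.mod_lt _ hK0⟩ : Fin K) = k from Fin.ext h5] at this
    have := sub_eq_zero.mp h6
    exact this
  constructor
  · -- membership
    refine ⟨E, fun k => ?_⟩
    refine ⟨fun c s => if h : ∃ x : Fin K → F, E x = c ∧
        (∀ t : Fin D, x ⟨((k : ℕ) + 1 + (t : ℕ)) % K, Nat.mod_lt _ (by omega)⟩ = s t)
      then h.choose k else 0, ?_⟩
    intro x
    have hx : ∃ x' : Fin K → F, E x' = E x ∧
        (∀ t : Fin D, x' ⟨((k : ℕ) + 1 + (t : ℕ)) % K, Nat.mod_lt _ (by omega)⟩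
          = x ⟨((k : ℕ) + 1 + (t : ℕ)) % K, Nat.mod_lt _ (by omega)⟩) :=
      ⟨x, rfl, fun _ => rfl⟩
    beta_reduce
    rw [dif_pos hx]
    obtain ⟨h1, h2⟩ := hx.choose_spec
    exact key k _ x h1 h2
  · -- lower bound
    intro N hN
    obtain ⟨E', hE'⟩ := hN
    choose dec hdec using hE'
    set p : (Fin (K - D) → F) →ₗ[F] (Fin K → F) := Stmt10Aux3.pad F (K - D) K with hp
    have hinj : Function.Injective (E' ∘ₗ p) := by
      intro y y' hyy
      have hyy' : E' (p y) = E' (p y') := hyy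
      have claim : ∀ n : ℕ, ∀ j : Fin K, K - D ≤ (j : ℕ) + n → p y j = p y' j := by
        intro n
        induction n with
        | zero =>
          intro j hj
          rw [Stmt10Aux3.pad_apply, Stmt10Aux3.pad_apply, dif_neg (by omega), dif_neg (by omega)]
        | succ n ihn =>
          intro j hj
          rcases le_or_gt (K - D) ((j : ℕ) + n) with hc | hc
          · exact ihn j hc
          · have hjlt : (j : ℕ) < K - D := by omega
            have hs := hdec j (p y)
            have hs' := hdec j (p y')
            rw [hyy'] at hs
            have hsides : (fun t : Fin D =>
                  p y ⟨((j : ℕ) + 1 + (t : ℕ)) % K, Nat.mod_lt _ (by omega)⟩)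
                = (fun t : Fin D =>
                  p y' ⟨((j : ℕ) + 1 + (t : ℕ)) % K, Nat.mod_lt _ (by omega)⟩) := by
              funext t
              have hlt : (j : ℕ) + 1 + (t : ℕ) < K := by omega
              have hmodeq : ((j : ℕ) + 1 + (t : ℕ)) % K = (j : ℕ) + 1 + (t : ℕ) :=
                Nat.mod_eq_of_lt hlt
              apply ihn ⟨((j : ℕ) + 1 + (t : ℕ)) % K, Nat.mod_lt _ (by omega)⟩
              have hval : ((⟨((j : ℕ) + 1 + (t : ℕ)) % K, Nat.mod_lt _ (by omega)⟩ : Fin K) : ℕ)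
                  = (j : ℕ) + 1 + (t : ℕ) := hmodeq
              omega
            rw [← hs, ← hs', hsides]
      funext i
      have h1 := claim K ⟨(i : ℕ), by omega⟩ (by omega)
      rw [Stmt10Aux3.pad_apply, Stmt10Aux3.pad_apply, dif_pos i.isLt, dif_pos i.isLt] at h1
      simpa using h1
    have hfr := LinearMap.finrank_le_finrank_of_injective hinj
    simpa [Module.finrank_fin_fun] using hfr
end

section
/- Let K=10, D=3, and consider over F₂ the index code c₀=x₀+x₇, c₁=x₁+x₈, c₂=x₂+x₉, c₃=x₃+x₇, c₄=x₄+x₈, c₅=x₅+x₉, c₆=x₆+x₇+x₈+x₉. Then every receiver R_k (demanding x_k with side-information {x_{k+1},...,x_{k+3}}, indices mod 10) can recover x_k from (c₀,...,c₆) and its side-information, and no linear code of length 6 over F₂ achieves this. -/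
/-- For K = 10, D = 3 over F₂, the 7-symbol code of Example 1 is decodable by every
receiver, and no linear code of length 6 achieves this. -/
theorem stmt11 :
    (∀ k : Fin 10, ∃ dec : (Fin 7 → ZMod 2) → (Fin 3 → ZMod 2) → ZMod 2,
      ∀ x : Fin 10 → ZMod 2,
        dec ![x 0 + x 7, x 1 + x 8, x 2 + x 9, x 3 + x 7, x 4 + x 8, x 5 + x 9,
              x 6 + x 7 + x 8 + x 9]
          (fun t => x ⟨((k : ℕ) + 1 + (t : ℕ)) % 10, Nat.mod_lt _ (by omega)⟩) = x k) ∧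
    ¬ ∃ E : (Fin 10 → ZMod 2) →ₗ[ZMod 2] (Fin 6 → ZMod 2),
        ∀ k : Fin 10, ∃ dec : (Fin 6 → ZMod 2) → (Fin 3 → ZMod 2) → ZMod 2,
          ∀ x : Fin 10 → ZMod 2,
            dec (E x)
              (fun t => x ⟨((k : ℕ) + 1 + (t : ℕ)) % 10, Nat.mod_lt _ (by omega)⟩)
              = x k := by
  constructor
  · intro k
    fin_cases k
    · refine ⟨fun c s => c 0 + c 3 + s 2, fun x => ?_⟩
      show x 0 + x 7 + (x 3 + x 7) + x 3 = x 0
      generalize x 0 = a; generalize x 3 = b; generalize x 7 = c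
      revert a b c; decide
    · refine ⟨fun c s => c 1 + c 4 + s 2, fun x => ?_⟩
      show x 1 + x 8 + (x 4 + x 8) + x 4 = x 1
      generalize x 1 = a; generalize x 4 = b; generalize x 8 = c
      revert a b c; decide
    · refine ⟨fun c s => c 2 + c 5 + s 2, fun x => ?_⟩
      show x 2 + x 9 + (x 5 + x 9) + x 5 = x 2
      generalize x 2 = a; generalize x 5 = b; generalize x 9 = c
      revert a b c; decide
    · refine ⟨fun c s => c 3 + c 4 + c 5 + c 6 + s 0 + s 1 + s 2, fun x => ?_⟩
      show x 3 + x 7 + (x 4 + x 8) + (x 5 + x 9) + (x 6 + x 7 + x 8 + x 9)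
            + x 4 + x 5 + x 6 = x 3
      generalize x 3 = a; generalize x 4 = b; generalize x 5 = c
      generalize x 6 = d; generalize x 7 = e; generalize x 8 = f; generalize x 9 = g
      revert a b c d e f g; decide
    · refine ⟨fun c s => c 4 + c 5 + c 6 + s 0 + s 1 + s 2, fun x => ?_⟩
      show x 4 + x 8 + (x 5 + x 9) + (x 6 + x 7 + x 8 + x 9) + x 5 + x 6 + x 7 = x 4
      generalize x 4 = a; generalize x 5 = b; generalize x 6 = c
      generalize x 7 = d; generalize x 8 = e; generalize x 9 = f
      revert a b c d e f; decide
    · refine ⟨fun c s => c 5 + c 6 + s 0 + s 1 + s 2, fun x => ?_⟩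
      show x 5 + x 9 + (x 6 + x 7 + x 8 + x 9) + x 6 + x 7 + x 8 = x 5
      generalize x 5 = a; generalize x 6 = b; generalize x 7 = c
      generalize x 8 = d; generalize x 9 = e
      revert a b c d e; decide
    · refine ⟨fun c s => c 6 + s 0 + s 1 + s 2, fun x => ?_⟩
      show x 6 + x 7 + x 8 + x 9 + x 7 + x 8 + x 9 = x 6
      generalize x 6 = a; generalize x 7 = b; generalize x 8 = c; generalize x 9 = d
      revert a b c d; decide
    · refine ⟨fun c s => c 0 + s 2, fun x => ?_⟩
      show x 0 + x 7 + x 0 = x 7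
      generalize x 0 = a; generalize x 7 = b
      revert a b; decide
    · refine ⟨fun c s => c 1 + s 2, fun x => ?_⟩
      show x 1 + x 8 + x 1 = x 8
      generalize x 1 = a; generalize x 8 = b
      revert a b; decide
    · refine ⟨fun c s => c 2 + s 2, fun x => ?_⟩
      show x 2 + x 9 + x 2 = x 9
      generalize x 2 = a; generalize x 9 = b
      revert a b; decide
  · rintro ⟨E, hdec⟩
    have key : Function.Injective
        (fun x : Fin 10 → ZMod 2 => (E x, x 0, x 1, x 2)) := by
      intro x y h
      simp only [Prod.mk.injEq] at h
      obtain ⟨hE, h0, h1, h2⟩ := h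
      have step : ∀ k : Fin 10,
          (∀ t : Fin 3,
              x ⟨((k : ℕ) + 1 + (t : ℕ)) % 10, Nat.mod_lt _ (by omega)⟩
                = y ⟨((k : ℕ) + 1 + (t : ℕ)) % 10, Nat.mod_lt _ (by omega)⟩) →
            x k = y k := by
        intro k hside
        obtain ⟨dec, hd⟩ := hdec k
        rw [← hd x, ← hd y, hE]
        congr 1
        funext t
        exact hside t
      have h9 : x 9 = y 9 := by
        apply step 9
        intro t; fin_cases t
        · exact h0
        · exact h1
        · exact h2
      have h8 : x 8 = y 8 := by
        apply step 8
        intro t; fin_cases t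
        · exact h9
        · exact h0
        · exact h1
      have h7 : x 7 = y 7 := by
        apply step 7
        intro t; fin_cases t
        · exact h8
        · exact h9
        · exact h0
      have h6 : x 6 = y 6 := by
        apply step 6
        intro t; fin_cases t
        · exact h7
        · exact h8
        · exact h9
      have h5 : x 5 = y 5 := by
        apply step 5
        intro t; fin_cases t
        · exact h6
        · exact h7
        · exact h8
      have h4 : x 4 = y 4 := by
        apply step 4
        intro t; fin_cases t
        · exact h5
        · exact h6
        · exact h7
      have h3 : x 3 = y 3 := by
        apply step 3
        intro t; fin_cases t
        · exact h4
        · exact h5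
        · exact h6
      funext i
      fin_cases i
      exacts [h0, h1, h2, h3, h4, h5, h6, h7, h8, h9]
    have hcard := Fintype.card_le_of_injective _ key
    rw [Fintype.card_fun, Fintype.card_prod, Fintype.card_fun, Fintype.card_prod,
      Fintype.card_prod] at hcard
    simp [ZMod.card] at hcard
end

section
/- Let K=13, D=3, and consider over F₂ the code c_k = x_k + x_{10 + (k mod 3)} for k ∈ [0,8] and c₉ = x₉ + x₁₀ + x₁₁ + x₁₂. Then: (a) for k ∈ [0,5], x_k = c_k + c_{k+3} + x_{k+3}; (b) x₆ = c₆+c₇+c₈+c₉ + x₇+x₈+x₉; (c) x₇ = c₇+c₈+c₉ + x₈+x₉+x₁₀; (d) x₈ = c₈+c₉ + x₉+x₁₀+x₁₁; (e) x₉ = c₉ + x₁₀+x₁₁+x₁₂; (f) for k ∈ [10,12], x_k = c_{k−10} + x_{k−10}. -/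
/-- For K = 13, D = 3 over F₂: the decoding identities (a)–(f) of every receiver. -/
theorem stmt13 (x : Fin 13 → ZMod 2) (c : Fin 10 → ZMod 2)
    (hc : ∀ i : ℕ, (hi : i < 9) →
      c ⟨i, by omega⟩ = x ⟨i, by omega⟩ + x ⟨10 + i % 3, by omega⟩)
    (hc9 : c 9 = x 9 + x 10 + x 11 + x 12) :
    (∀ k : ℕ, (hk : k < 6) →
      x ⟨k, by omega⟩ = c ⟨k, by omega⟩ + c ⟨k + 3, by omega⟩ + x ⟨k + 3, by omega⟩) ∧
    x 6 = c 6 + c 7 + c 8 + c 9 + x 7 + x 8 + x 9 ∧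
    x 7 = c 7 + c 8 + c 9 + x 8 + x 9 + x 10 ∧
    x 8 = c 8 + c 9 + x 9 + x 10 + x 11 ∧
    x 9 = c 9 + x 10 + x 11 + x 12 ∧
    (∀ k : ℕ, (hk1 : 10 ≤ k) → (hk2 : k ≤ 12) →
      x ⟨k, by omega⟩ = c ⟨k - 10, by omega⟩ + x ⟨k - 10, by omega⟩) := by
  have h0 : c 0 = x 0 + x 10 := hc 0 (by norm_num)
  have h1 : c 1 = x 1 + x 11 := hc 1 (by norm_num)
  have h2 : c 2 = x 2 + x 12 := hc 2 (by norm_num)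
  have h3 : c 3 = x 3 + x 10 := hc 3 (by norm_num)
  have h4 : c 4 = x 4 + x 11 := hc 4 (by norm_num)
  have h5 : c 5 = x 5 + x 12 := hc 5 (by norm_num)
  have h6 : c 6 = x 6 + x 10 := hc 6 (by norm_num)
  have h7 : c 7 = x 7 + x 11 := hc 7 (by norm_num)
  have h8 : c 8 = x 8 + x 12 := hc 8 (by norm_num)
  have two : (2 : ZMod 2) = 0 := rfl
  refine ⟨?_, ?_, ?_, ?_, ?_, ?_⟩
  · intro k hk
    interval_cases k
    · show x 0 = c 0 + c 3 + x 3; rw [h0, h3]; ring_nf; simp [two]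
    · show x 1 = c 1 + c 4 + x 4; rw [h1, h4]; ring_nf; simp [two]
    · show x 2 = c 2 + c 5 + x 5; rw [h2, h5]; ring_nf; simp [two]
    · show x 3 = c 3 + c 6 + x 6; rw [h3, h6]; ring_nf; simp [two]
    · show x 4 = c 4 + c 7 + x 7; rw [h4, h7]; ring_nf; simp [two]
    · show x 5 = c 5 + c 8 + x 8; rw [h5, h8]; ring_nf; simp [two]
  · rw [h6, h7, h8, hc9]; ring_nf; simp [two]
  · rw [h7, h8, hc9]; ring_nf; simp [two]
  · rw [h8, hc9]; ring_nf; simp [two]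
  · rw [hc9]; ring_nf; simp [two]
  · intro k hk1 hk2
    interval_cases k
    · show x 10 = c 0 + x 0; rw [h0]; ring_nf; simp [two]
    · show x 11 = c 1 + x 1; rw [h1]; ring_nf; simp [two]
    · show x 12 = c 2 + x 2; rw [h2]; ring_nf; simp [two]
end

section
/- Let L be the (K,D) AIR matrix, k ∈ [0, K−D−λ_l−1], and suppose k lies in the set D_i = [K−D−λ_{2i−1}, K−D−λ_{2i−1}+(β_{2i}−1)λ_{2i}−1] with k mod (K−D−λ_{2i−1}) = cλ_{2i}+d, 0 ≤ d < λ_{2i}. Let μ_k = λ_{2i} be the right-distance of L(k+d_down(k), k). Then d_down(k) − d_up(k+d_down(k), k+μ_k) = D, i.e., the sum of columns k and k+μ_k of L contains, besides x_k, only entries corresponding to indices in {k+1,...,k+D} (mod K). -/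
lemma airEntry_eq (K n j k : ℕ) : airEntry K n j k = if n = 0 ∨ K ≤ n then decide (j = k)
    else
      if j < K - K % n then decide (j % n = k % n)
      else
        if k < n - n % (K % n) then decide (k % (K % n) = j - (K - K % n))
        else airEntry (K % n) (n % (K % n)) (j - (K - K % n)) (k - (n - n % (K % n))) := by
  rw [airEntry]
  split <;> rfl

lemma lamPair_zero (K D : ℕ) : lamPair K D 0 = (K - D, D) := rfl

lemma lamPair_succ (K D j : ℕ) : lamPair K D (j+1) =
    ((lamPair K D j).2, if (lamPair K D j).2 = 0 then 0 else (lamPair K D j).1 % (lamPair K D j).2) := rfl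

lemma lamPair_shift (a b : ℕ) : ∀ j, lamPair (a + b) b (j+1)
    = lamPair (b + (if b = 0 then 0 else a % b)) (if b = 0 then 0 else a % b) j := by
  intro j
  induction j with
  | zero => simp [lamPair_succ, lamPair_zero, Nat.add_sub_cancel]
  | succ j ih => rw [lamPair_succ, ih, lamPair_succ]

lemma fst_succ (K D j : ℕ) : (lamPair K D (j+1)).1 = (lamPair K D j).2 := rfl

lemma snd_succ_le (K D j : ℕ) : (lamPair K D (j+1)).2 ≤ (lamPair K D j).2 := by
  rw [lamPair_succ]
  dsimp only
  split
  · omega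
  · exact le_of_lt (Nat.mod_lt _ (by omega))

lemma snd_mono (K D : ℕ) {j j' : ℕ} (h : j ≤ j') : (lamPair K D j').2 ≤ (lamPair K D j).2 := by
  induction j' with
  | zero =>
    have : j = 0 := by omega
    subst this; rfl
  | succ m ih =>
    rcases Nat.lt_or_ge j (m+1) with hlt | hge
    · exact le_trans (snd_succ_le K D m) (ih (by omega))
    · have : j = m + 1 := by omega
      subst this; rfl

lemma snd_lt_fst (a b : ℕ) (h : b < a) : ∀ j, (lamPair (a+b) b j).2 ≠ 0 →
    (lamPair (a+b) b j).2 < (lamPair (a+b) b j).1 := by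
  intro j hj
  cases j with
  | zero => rw [lamPair_zero] at *; simpa [Nat.add_sub_cancel] using h
  | succ m =>
    rw [lamPair_succ] at *
    split at hj
    · omega
    · rename_i h0
      dsimp only
      rw [if_neg h0]
      exact Nat.mod_lt _ (by omega)

lemma snd_succ_eq (K D j : ℕ) (h : (lamPair K D j).2 ≠ 0) :
    (lamPair K D (j+1)).2 = (lamPair K D j).1 % (lamPair K D j).2 := by
  rw [lamPair_succ]; simp [h]

lemma mod_gap {n x y : ℕ} (h : x % n = y % n) (hxy : x < y) : x + n ≤ y := by
  rcases Nat.eq_zero_or_pos n with h0 | h0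
  · subst h0; simp only [Nat.mod_zero] at h; omega
  · have hx := Nat.div_add_mod x n
    have hy := Nat.div_add_mod y n
    have h1 : x / n < y / n := by
      by_contra hc
      push_neg at hc
      have := Nat.mul_le_mul_left n hc
      omega
    have h2 : n * (x / n) + n ≤ n * (y / n) := by
      have := Nat.mul_le_mul_left n (Nat.succ_le_of_lt h1)
      rw [Nat.mul_succ] at this
      omega
    omega

lemma mod_char_mpr {n t y : ℕ} (hy : y < n) : (n * t + y) % n = y := by
  rw [Nat.mul_add_mod]; exact Nat.mod_eq_of_lt hy

lemma top_mod {n k q : ℕ} (hk : k < n) (hq : 1 ≤ q) : (n * q - n + k) % n = k := by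
  obtain ⟨q', rfl⟩ : ∃ q', q = q' + 1 := ⟨q - 1, by omega⟩
  have e : n * (q' + 1) = n * q' + n := by ring
  have h : n * (q' + 1) - n + k = n * q' + k := by omega
  rw [h, mod_char_mpr hk]

lemma shift_iff {n k μ j : ℕ} (h : k + μ < n) : j % n = k + μ ↔ (μ ≤ j ∧ (j - μ) % n = k) := by
  constructor
  · intro hj
    have hj' := Nat.div_add_mod j n
    have hμj : μ ≤ j := le_trans (by omega : μ ≤ j % n) (Nat.mod_le j n)
    refine ⟨hμj, ?_⟩
    have he : j - μ = n * (j / n) + k := by omega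
    rw [he, mod_char_mpr (by omega)]
  · rintro ⟨hμj, hjk⟩
    have hj' := Nat.div_add_mod (j - μ) n
    have he : j = n * ((j-μ)/n) + (k + μ) := by omega
    rw [he, mod_char_mpr h]

def pP (K n i : ℕ) : ℕ × ℕ := lamPair (n + K % n) (K % n) (2 * i)
def pmu (K n i : ℕ) : ℕ := (pP K n i).2
def pM (K n i : ℕ) : ℕ := n - (pP K n i).1
def pd (K n i k : ℕ) : ℕ := k % pM K n i % pmu K n i
def pR (K n i k : ℕ) : ℕ := K - pmu K n i + pd K n i k

theorem mainP : ∀ K n i k : ℕ, 0 < n → n < K →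
    pM K n i ≤ k →
    k < pM K n i + ((pP K n i).1 / pmu K n i - 1) * pmu K n i →
    (0 < pmu K n i ∧ pmu K n i ≤ K - n ∧ k + (K - n) < pR K n i k ∧ pR K n i k < K) ∧
    airEntry K n (pR K n i k) k = true ∧
    (∀ j, pR K n i k < j → j < K → airEntry K n j k = false) ∧
    airEntry K n (k + (K - n) - pmu K n i) k = true ∧
    (∀ j, k + (K - n) - pmu K n i < j → j < pR K n i k → airEntry K n j k = false) ∧
    (∀ j, j < pR K n i k →
      (airEntry K n j (k + pmu K n i) = true ↔ pmu K n i ≤ j ∧ airEntry K n (j - pmu K n i) k = true)) := by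
  intro K
  induction K using Nat.strong_induction_on with
  | _ K IH =>
  intro n i k hn hnK hp1 hp2
  have hnot : ¬ (n = 0 ∨ K ≤ n) := by push_neg; omega
  have hc0lt : K % n < n := Nat.mod_lt _ hn
  have hA := Nat.div_add_mod K n
  have hq : 1 ≤ K / n := (Nat.one_le_div_iff hn).mpr (le_of_lt hnK)
  have hAn : n ≤ n * (K / n) := by simpa using Nat.mul_le_mul_left n hq
  have hμ0 : 0 < pmu K n i := by
    rcases Nat.eq_zero_or_pos (pmu K n i) with h0 | h0
    · exfalso; rw [h0] at hp2; simp at hp2; omega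
    · exact h0
  have h00 : (lamPair (n + K % n) (K % n) 0).2 = K % n := by rw [lamPair_zero]
  have hμc0 : pmu K n i ≤ K % n := by
    have h := snd_mono (n + K % n) (K % n) (Nat.zero_le (2 * i))
    rw [h00] at h; exact h
  have hc0pos : 0 < K % n := lt_of_lt_of_le hμ0 hμc0
  have hfst_le : (pP K n i).1 ≤ n := by
    cases i with
    | zero =>
      show (lamPair (n + K % n) (K % n) (2 * 0)).1 ≤ n
      simp only [Nat.mul_zero, lamPair_zero, Nat.add_sub_cancel, le_refl]
    | succ m =>
      show (lamPair (n + K % n) (K % n) (2 * (m + 1))).1 ≤ n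
      have h2 : 2 * (m + 1) = (2 * m + 1) + 1 := by ring
      rw [h2, fst_succ]
      have := snd_mono (n + K % n) (K % n) (Nat.zero_le (2 * m + 1))
      rw [h00] at this
      omega
  have hpmu_def : pmu K n i = (lamPair (n + K % n) (K % n) (2 * i)).2 := rfl
  have hμfst : pmu K n i < (pP K n i).1 :=
    snd_lt_fst n (K % n) hc0lt (2 * i) (by omega)
  have hdm' : (pP K n i).1 / pmu K n i * pmu K n i + (pP K n i).1 % pmu K n i = (pP K n i).1 :=
    Nat.div_add_mod' _ _
  have hβ1 : 1 ≤ (pP K n i).1 / pmu K n i := (Nat.one_le_div_iff hμ0).mpr (le_of_lt hμfst)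
  have hBmul : ((pP K n i).1 / pmu K n i - 1) * pmu K n i + pmu K n i
      = (pP K n i).1 / pmu K n i * pmu K n i := by
    rw [Nat.sub_one_mul]
    have h1 : pmu K n i ≤ (pP K n i).1 / pmu K n i * pmu K n i := by
      calc pmu K n i = 1 * pmu K n i := (one_mul _).symm
        _ ≤ _ := Nat.mul_le_mul_right _ hβ1
    omega
  have hM : pM K n i = n - (pP K n i).1 := rfl
  have hkb : k + pmu K n i + (pP K n i).1 % pmu K n i < n := by omega
  have hd : pd K n i k < pmu K n i := Nat.mod_lt _ hμ0
  have hpd : pd K n i k = k % pM K n i % pmu K n i := rfl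
  have hR : pR K n i k = K - pmu K n i + pd K n i k := rfl
  rcases Nat.eq_zero_or_pos i with rfl | hipos
  · -- base case i = 0
    have hpr : pP K n 0 = (n, K % n) := by
      show lamPair (n + K % n) (K % n) (2 * 0) = _
      simp only [Nat.mul_zero, lamPair_zero, Nat.add_sub_cancel]
    have hμe : pmu K n 0 = K % n := by show (pP K n 0).2 = K % n; rw [hpr]
    have hMe : pM K n 0 = 0 := by show n - (pP K n 0).1 = 0; rw [hpr]; omega
    have hde : pd K n 0 k = k % (K % n) := by
      show k % pM K n 0 % pmu K n 0 = _
      rw [hMe, hμe, Nat.mod_zero]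
    have hRe : pR K n 0 k = K - K % n + k % (K % n) := by
      show K - pmu K n 0 + pd K n 0 k = _
      rw [hμe, hde]
    have hkb' : k + K % n + n % (K % n) < n := by
      have h := hkb
      rw [hμe, hpr] at h
      simpa using h
    have hdk : k % (K % n) < K % n := Nat.mod_lt _ hc0pos
    refine ⟨⟨hμ0, by omega, by omega, by omega⟩, ?_, ?_, ?_, ?_, ?_⟩
    · rw [hRe, airEntry_eq, if_neg hnot, if_neg (by omega), if_pos (by omega)]
      simp only [decide_eq_true_eq]
      omega
    · intro j hj1 hj2
      rw [hRe] at hj1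
      rw [airEntry_eq, if_neg hnot, if_neg (by omega), if_pos (by omega)]
      simp only [decide_eq_false_iff_not]
      omega
    · rw [hμe]
      have hrow : k + (K - n) - K % n = n * (K / n) - n + k := by omega
      rw [hrow, airEntry_eq, if_neg hnot, if_pos (by omega)]
      simp only [decide_eq_true_eq]
      rw [top_mod (by omega) hq]
      exact (Nat.mod_eq_of_lt (by omega)).symm
    · intro j hj1 hj2
      rw [hμe] at hj1
      rw [hRe] at hj2
      rw [airEntry_eq, if_neg hnot]
      by_cases hjT : j < K - K % n
      · rw [if_pos hjT]
        simp only [decide_eq_false_iff_not]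
        intro hcon
        rw [Nat.mod_eq_of_lt (show k < n by omega)] at hcon
        have h1 : (n * (K / n) - n + k) % n = k := top_mod (by omega) hq
        have := mod_gap (h1.trans hcon.symm) (show n * (K / n) - n + k < j by omega)
        omega
      · rw [if_neg hjT, if_pos (by omega)]
        simp only [decide_eq_false_iff_not]
        omega
    · intro j hj
      rw [hRe] at hj
      rw [hμe]
      have hkμn : k + K % n < n := by omega
      by_cases hjT : j < K - K % n
      · rw [airEntry_eq, if_neg hnot, if_pos hjT,
          airEntry_eq K n (j - K % n) k, if_neg hnot, if_pos (by omega)]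
        simp only [decide_eq_true_eq]
        rw [Nat.mod_eq_of_lt hkμn, Nat.mod_eq_of_lt (show k < n by omega)]
        exact shift_iff hkμn
      · have hL : airEntry K n j (k + K % n) = false := by
          rw [airEntry_eq, if_neg hnot, if_neg hjT, if_pos (by omega)]
          simp only [decide_eq_false_iff_not]
          rw [Nat.add_mod_right]
          omega
        have hRf : airEntry K n (j - K % n) k = false := by
          rw [airEntry_eq, if_neg hnot, if_pos (by omega)]
          simp only [decide_eq_false_iff_not]
          rw [Nat.mod_eq_of_lt (show k < n by omega)]
          intro hcon
          have h1 : (n * (K / n) - n + k) % n = k := top_mod (by omega) hq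
          have := mod_gap (h1.trans hcon.symm)
            (show n * (K / n) - n + k < j - K % n by omega)
          omega
        rw [hL, hRf]
        constructor
        · intro h; exact absurd h (by simp)
        · rintro ⟨-, h⟩; exact absurd h (by simp)
  · -- step case: i ≥ 1
    obtain ⟨i', rfl⟩ : ∃ j, i = j + 1 := ⟨i - 1, by omega⟩
    have hc1lt : n % (K % n) < K % n := Nat.mod_lt _ hc0pos
    have e1 : (lamPair (n + K % n) (K % n) 1).2 = n % (K % n) := by
      rw [snd_succ_eq _ _ 0 (by rw [h00]; omega), lamPair_zero]
      rw [Nat.add_sub_cancel]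
    have hμ2le : pmu K n (i' + 1) ≤ (lamPair (n + K % n) (K % n) 2).2 :=
      snd_mono _ _ (by omega : 2 ≤ 2 * (i' + 1))
    have hc1pos : 0 < n % (K % n) := by
      by_contra hcon
      push_neg at hcon
      have h2 : (lamPair (n + K % n) (K % n) 2).2 = 0 := by
        rw [lamPair_succ]
        simp only [e1]
        rw [if_pos (by omega)]
      omega
    have e2 : (lamPair (n + K % n) (K % n) 2).2 = K % n % (n % (K % n)) := by
      rw [snd_succ_eq _ _ 1 (by rw [e1]; omega), e1, fst_succ, h00]
    have hc2pos : 0 < K % n % (n % (K % n)) := by rw [e2] at hμ2le; omega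
    have hc2lt : K % n % (n % (K % n)) < n % (K % n) := Nat.mod_lt _ hc1pos
    have hμc2 : pmu K n (i' + 1) ≤ K % n % (n % (K % n)) := by rw [e2] at hμ2le; exact hμ2le
    have hc01 : K % n + n % (K % n) ≤ n := by
      have h := Nat.div_add_mod n (K % n)
      have hq1 : 1 ≤ n / (K % n) := (Nat.one_le_div_iff hc0pos).mpr (le_of_lt hc0lt)
      have := Nat.mul_le_mul_left (K % n) hq1
      omega
    have hc12 : n % (K % n) + K % n % (n % (K % n)) ≤ K % n := by
      have h := Nat.div_add_mod (K % n) (n % (K % n))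
      have hq1 : 1 ≤ K % n / (n % (K % n)) := (Nat.one_le_div_iff hc1pos).mpr (le_of_lt hc1lt)
      have := Nat.mul_le_mul_left (n % (K % n)) hq1
      omega
    have hfst1 : (pP K n (i' + 1)).1 = (lamPair (n + K % n) (K % n) (2 * i' + 1)).2 := by
      show (lamPair (n + K % n) (K % n) (2 * (i' + 1))).1 = _
      have h2 : 2 * (i' + 1) = (2 * i' + 1) + 1 := by ring
      rw [h2, fst_succ]
    have hfstc1 : (pP K n (i' + 1)).1 ≤ n % (K % n) := by
      rw [hfst1, ← e1]
      exact snd_mono _ _ (by omega)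
    have hshift1 : ∀ m, lamPair (n + K % n) (K % n) (m + 1)
        = lamPair (K % n + n % (K % n)) (n % (K % n)) m := by
      intro m
      have h := lamPair_shift n (K % n) m
      rw [if_neg (by omega)] at h
      exact h
    have hshift2 : ∀ m, lamPair (K % n + n % (K % n)) (n % (K % n)) (m + 1)
        = lamPair (n % (K % n) + K % n % (n % (K % n))) (K % n % (n % (K % n))) m := by
      intro m
      have h := lamPair_shift (K % n) (n % (K % n)) m
      rw [if_neg (by omega)] at h
      exact h
    have hPP : pP (K % n) (n % (K % n)) i' = pP K n (i' + 1) := by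
      show lamPair (n % (K % n) + K % n % (n % (K % n))) (K % n % (n % (K % n))) (2 * i')
        = lamPair (n + K % n) (K % n) (2 * (i' + 1))
      have h2 : 2 * (i' + 1) = (2 * i' + 1) + 1 := by ring
      rw [h2, hshift1, hshift2]
    have hμeq : pmu (K % n) (n % (K % n)) i' = pmu K n (i' + 1) := by
      show (pP (K % n) (n % (K % n)) i').2 = (pP K n (i' + 1)).2
      rw [hPP]
    have hMsub : pM (K % n) (n % (K % n)) i' = n % (K % n) - (pP K n (i' + 1)).1 := by
      show n % (K % n) - (pP (K % n) (n % (K % n)) i').1 = _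
      rw [hPP]
    have hkM : k % pM K n (i' + 1) = k - pM K n (i' + 1) := by
      rw [Nat.mod_eq_sub_mod hp1, Nat.mod_eq_of_lt (by omega)]
    have hXY : (k - (n - n % (K % n))) % (n % (K % n) - (pP K n (i' + 1)).1)
        = k - pM K n (i' + 1) := by
      rcases Nat.eq_zero_or_pos i' with rfl | hi'
      · have hfe : (pP K n (0 + 1)).1 = n % (K % n) := by
          rw [hfst1]
          simp only [Nat.mul_zero, Nat.zero_add]
          exact e1
        rw [hfe, Nat.sub_self, Nat.mod_zero]
        omega
      · have e3 : (lamPair (n + K % n) (K % n) 3).2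
            = n % (K % n) % (K % n % (n % (K % n))) := by
          rw [snd_succ_eq _ _ 2 (by rw [e2]; omega), e2, fst_succ, e1]
        have hfst3 : (pP K n (i' + 1)).1 ≤ (lamPair (n + K % n) (K % n) 3).2 := by
          rw [hfst1]
          exact snd_mono _ _ (by omega)
        have hc3lt : n % (K % n) % (K % n % (n % (K % n))) < K % n % (n % (K % n)) :=
          Nat.mod_lt _ hc2pos
        have hc23 : K % n % (n % (K % n)) + n % (K % n) % (K % n % (n % (K % n)))
            ≤ n % (K % n) := by
          have h := Nat.div_add_mod (n % (K % n)) (K % n % (n % (K % n)))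
          have hq1 : 1 ≤ n % (K % n) / (K % n % (n % (K % n))) :=
            (Nat.one_le_div_iff hc2pos).mpr (le_of_lt hc2lt)
          have := Nat.mul_le_mul_left (K % n % (n % (K % n))) hq1
          omega
        rw [e3] at hfst3
        rw [Nat.mod_eq_sub_mod (by omega), Nat.mod_eq_of_lt (by omega)]
        omega
    have hdsub : pd (K % n) (n % (K % n)) i' (k - (n - n % (K % n))) = pd K n (i' + 1) k := by
      show (k - (n - n % (K % n))) % pM (K % n) (n % (K % n)) i'
          % pmu (K % n) (n % (K % n)) i' = k % pM K n (i' + 1) % pmu K n (i' + 1)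
      rw [hμeq, hMsub, hXY, hkM]
    have hp1' : pM (K % n) (n % (K % n)) i' ≤ k - (n - n % (K % n)) := by
      rw [hMsub]; omega
    have hp2' : k - (n - n % (K % n)) < pM (K % n) (n % (K % n)) i'
        + ((pP (K % n) (n % (K % n)) i').1 / pmu (K % n) (n % (K % n)) i' - 1)
          * pmu (K % n) (n % (K % n)) i' := by
      rw [hμeq, hMsub, hPP]
      omega
    have IHres := IH (K % n) (by omega) (n % (K % n)) i' (k - (n - n % (K % n)))
      hc1pos hc1lt hp1' hp2'
    obtain ⟨⟨hsμ0, hsμle, hsR1, hsR2⟩, sC1, sC2, sC3, sC4, sC5⟩ := IHres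
    have hRsub : pR (K % n) (n % (K % n)) i' (k - (n - n % (K % n)))
        = K % n - pmu K n (i' + 1) + pd K n (i' + 1) k := by
      show K % n - pmu (K % n) (n % (K % n)) i'
          + pd (K % n) (n % (K % n)) i' (k - (n - n % (K % n))) = _
      rw [hμeq, hdsub]
    have hRdec : pR K n (i' + 1) k
        = (K - K % n) + pR (K % n) (n % (K % n)) i' (k - (n - n % (K % n))) := by
      rw [hRsub]
      show K - pmu K n (i' + 1) + pd K n (i' + 1) k = _
      omega
    have hcolk : n - n % (K % n) ≤ k := by omega
    have hbr : ∀ j col, K - K % n ≤ j → n - n % (K % n) ≤ col →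
        airEntry K n j col
          = airEntry (K % n) (n % (K % n)) (j - (K - K % n)) (col - (n - n % (K % n))) := by
      intro j col h1 h2
      rw [airEntry_eq, if_neg hnot, if_neg (by omega), if_neg (by omega)]
    refine ⟨⟨hμ0, by omega, by omega, by omega⟩, ?_, ?_, ?_, ?_, ?_⟩
    · rw [hRdec, hbr _ _ (by omega) hcolk, Nat.add_sub_cancel_left]
      exact sC1
    · intro j h1 h2
      rw [hRdec] at h1
      rw [hbr j k (by omega) hcolk]
      exact sC2 _ (by omega) (by omega)
    · have hrow : k + (K - n) - pmu K n (i' + 1)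
          = (K - K % n) + ((k - (n - n % (K % n))) + (K % n - n % (K % n)) - pmu K n (i' + 1)) := by
        omega
      rw [hrow, hbr _ _ (by omega) hcolk, Nat.add_sub_cancel_left, ← hμeq]
      exact sC3
    · intro j h1 h2
      rw [hRdec] at h2
      have hrow : k + (K - n) - pmu K n (i' + 1)
          = (K - K % n) + ((k - (n - n % (K % n))) + (K % n - n % (K % n)) - pmu K n (i' + 1)) := by
        omega
      rw [hbr j k (by omega) hcolk]
      refine sC4 _ ?_ (by omega)
      rw [hμeq]
      omega
    · intro j hj
      rw [hRdec] at hj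
      have hkμn : k + pmu K n (i' + 1) < n := by omega
      by_cases hjT : j < K - K % n
      · rw [airEntry_eq, if_neg hnot, if_pos hjT,
          airEntry_eq K n (j - pmu K n (i' + 1)) k, if_neg hnot, if_pos (by omega)]
        simp only [decide_eq_true_eq]
        rw [Nat.mod_eq_of_lt hkμn, Nat.mod_eq_of_lt (show k < n by omega)]
        exact shift_iff hkμn
      · have hcol2 : n - n % (K % n) ≤ k + pmu K n (i' + 1) := by omega
        rw [hbr j _ (by omega) hcol2,
          show k + pmu K n (i' + 1) - (n - n % (K % n))
            = (k - (n - n % (K % n))) + pmu K n (i' + 1) by omega]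
        have h5' := sC5 (j - (K - K % n)) (by omega)
        rw [hμeq] at h5'
        rw [h5']
        by_cases hjm : K - K % n + pmu K n (i' + 1) ≤ j
        · rw [hbr (j - pmu K n (i' + 1)) k (by omega) hcolk,
            show j - pmu K n (i' + 1) - (K - K % n)
              = j - (K - K % n) - pmu K n (i' + 1) by omega]
          constructor
          · rintro ⟨h1, h2⟩; exact ⟨by omega, h2⟩
          · rintro ⟨h1, h2⟩; exact ⟨by omega, h2⟩
        · have hfj : airEntry K n (j - pmu K n (i' + 1)) k = false := by
            rw [airEntry_eq, if_neg hnot, if_pos (by omega)]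
            simp only [decide_eq_false_iff_not]
            rw [Nat.mod_eq_of_lt (show k < n by omega)]
            intro hcon
            have h1 : (n * (K / n) - n + k) % n = k := top_mod (by omega) hq
            have := mod_gap (h1.trans hcon.symm)
              (show n * (K / n) - n + k < j - pmu K n (i' + 1) by omega)
            omega
          rw [hfj]
          constructor
          · rintro ⟨h1, -⟩; exact absurd h1 (by omega)
          · rintro ⟨-, h2⟩; exact absurd h2 (by simp)

lemma endgame (K n i k : ℕ) (hn : 0 < n) (hnK : n < K)
    (hp1 : pM K n i ≤ k)
    (hp2 : k < pM K n i + ((pP K n i).1 / pmu K n i - 1) * pmu K n i) :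
    ddown K n k - dup K n (k + ddown K n k) (k + pmu K n i) = K - n := by
  obtain ⟨⟨hμ0, hμle, hR1, hR2⟩, C1, C2, C3, C4, C5⟩ := mainP K n i k hn hnK hp1 hp2
  have hkR : k < pR K n i k := by omega
  have hdd : ddown K n k = pR K n i k - k := by
    unfold ddown
    have hg : IsGreatest {t : ℕ | 0 < t ∧ k + t < K ∧ airEntry K n (k + t) k = true}
        (pR K n i k - k) := by
      constructor
      · refine ⟨by omega, by omega, ?_⟩
        rw [show k + (pR K n i k - k) = pR K n i k by omega]
        exact C1
      · intro t ht
        obtain ⟨ht0, htK, hte⟩ := ht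
        by_contra hcon
        push_neg at hcon
        have hf := C2 (k + t) (by omega) htK
        simp [hte] at hf
    exact hg.csSup_eq
  rw [hdd, show k + (pR K n i k - k) = pR K n i k by omega]
  have hdup : dup K n (pR K n i k) (k + pmu K n i) = pR K n i k - (k + (K - n)) := by
    unfold dup
    have hg : IsGreatest {j' : ℕ | j' < pR K n i k ∧ airEntry K n j' (k + pmu K n i) = true}
        (k + (K - n)) := by
      constructor
      · refine ⟨by omega, ?_⟩
        exact (C5 _ (by omega)).mpr ⟨by omega, C3⟩
      · intro j' hj'
        obtain ⟨hj'R, hj'e⟩ := hj'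
        obtain ⟨hμj', hje⟩ := (C5 _ hj'R).mp hj'e
        by_contra hcon
        push_neg at hcon
        have hf := C4 (j' - pmu K n i) (by omega) (by omega)
        simp [hje] at hf
    rw [hg.csSup_eq]
  rw [hdup]
  omega


/-- Case (i) of Theorem 2: for k ∈ D_i, with μ_k = λ_{2i},
d_down(k) − d_up(k + d_down(k), k + μ_k) = D. -/
theorem stmt14 (K D l i k c d : ℕ) (hD : 0 < D) (hDK : D < K)
    (hl : lam K D (l + 1) = 0) (hmin : ∀ j ≤ l, lam K D j ≠ 0)
    (hi : i ≤ (l + 1) / 2)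
    (hkl : k < K - D - lam K D l)
    (hk1 : K - D - lamS K D (2 * i) ≤ k)
    (hk2 : k < K - D - lamS K D (2 * i) + (beta K D (2 * i) - 1) * lam K D (2 * i))
    (hcd : k % (K - D - lamS K D (2 * i)) = c * lam K D (2 * i) + d)
    (hd : d < lam K D (2 * i)) :
    ddown K (K - D) k - dup K (K - D) (k + ddown K (K - D) k) (k + lam K D (2 * i)) = D := by
  rcases lt_trichotomy D (K - D) with hlt | heq | hgt
  · -- D < K - D
    have hmod : K % (K - D) = D := by
      have h := Nat.add_mod_left (K - D) D
      rw [show K - D + D = K by omega] at h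
      rw [h]
      exact Nat.mod_eq_of_lt hlt
    have hpp : pP K (K - D) i = lamPair K D (2 * i) := by
      show lamPair (K - D + K % (K - D)) (K % (K - D)) (2 * i) = _
      rw [hmod, show K - D + D = K by omega]
    have hlam : lam K D (2 * i) = pmu K (K - D) i := by
      show (lamPair K D (2 * i)).2 = (pP K (K - D) i).2
      rw [hpp]
    have hlamS : lamS K D (2 * i) = (pP K (K - D) i).1 := by
      show (lamPair K D (2 * i)).1 = _
      rw [hpp]
    have hp1 : pM K (K - D) i ≤ k := by
      show K - D - (pP K (K - D) i).1 ≤ k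
      rw [← hlamS]
      exact hk1
    have hp2 : k < pM K (K - D) i
        + ((pP K (K - D) i).1 / pmu K (K - D) i - 1) * pmu K (K - D) i := by
      show k < K - D - (pP K (K - D) i).1
        + ((pP K (K - D) i).1 / (pP K (K - D) i).2 - 1) * (pP K (K - D) i).2
      rw [hpp]
      exact hk2
    have hres := endgame K (K - D) i k (by omega) (by omega) hp1 hp2
    rw [show K - (K - D) = D by omega] at hres
    rw [hlam]
    exact hres
  · -- D = K - D
    exfalso
    have h1 : lam K D 1 = 0 := by
      show (lamPair K D 1).2 = 0
      rw [lamPair_succ, lamPair_zero]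
      simp only
      rw [if_neg (by omega), ← heq, Nat.mod_self]
    have hl0 : l = 0 := by
      by_contra hc
      exact hmin 1 (by omega) h1
    have hlam0 : lam K D 0 = D := by
      show (lamPair K D 0).2 = D
      rw [lamPair_zero]
    rw [hl0, hlam0] at hkl
    omega
  · -- K - D < D
    cases i with
    | zero =>
      exfalso
      have h0 : lamS K D 0 = K - D := by
        show (lamPair K D 0).1 = _
        rw [lamPair_zero]
      have h1 : beta K D 0 = 0 := by
        show (lamPair K D 0).1 / (lamPair K D 0).2 = 0
        rw [lamPair_zero]
        exact Nat.div_eq_of_lt hgt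
      rw [show (2 : ℕ) * 0 = 0 by norm_num] at hk2
      rw [h0, h1] at hk2
      omega
    | succ i'' =>
      have hmod : K % (K - D) = D % (K - D) := by
        have h := Nat.add_mod_left (K - D) D
        rw [show K - D + D = K by omega] at h
        exact h
      have hs1 : ∀ m, lamPair K D (m + 1) = lamPair (D + (K - D)) (K - D) m := by
        intro m
        have h := lamPair_shift (K - D) D m
        rw [show K - D + D = K by omega, if_neg (by omega), Nat.mod_eq_of_lt hgt] at h
        exact h
      have hs2 : ∀ m, lamPair (D + (K - D)) (K - D) (m + 1)
          = lamPair (K - D + K % (K - D)) (K % (K - D)) m := by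
        intro m
        have h := lamPair_shift D (K - D) m
        rw [if_neg (by omega), ← hmod] at h
        exact h
      have hpp : pP K (K - D) i'' = lamPair K D (2 * (i'' + 1)) := by
        show lamPair (K - D + K % (K - D)) (K % (K - D)) (2 * i'') = _
        have h2 : 2 * (i'' + 1) = (2 * i'' + 1) + 1 := by ring
        rw [h2, hs1, hs2]
      have hlam : lam K D (2 * (i'' + 1)) = pmu K (K - D) i'' := by
        show (lamPair K D (2 * (i'' + 1))).2 = (pP K (K - D) i'').2
        rw [hpp]
      have hlamS : lamS K D (2 * (i'' + 1)) = (pP K (K - D) i'').1 := by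
        show (lamPair K D (2 * (i'' + 1))).1 = _
        rw [hpp]
      have hp1 : pM K (K - D) i'' ≤ k := by
        show K - D - (pP K (K - D) i'').1 ≤ k
        rw [← hlamS]
        exact hk1
      have hp2 : k < pM K (K - D) i''
          + ((pP K (K - D) i'').1 / pmu K (K - D) i'' - 1) * pmu K (K - D) i'' := by
        show k < K - D - (pP K (K - D) i'').1
          + ((pP K (K - D) i'').1 / (pP K (K - D) i'').2 - 1) * (pP K (K - D) i'').2
        rw [hpp]
        exact hk2
      have hres := endgame K (K - D) i'' k (by omega) (by omega) hp1 hp2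
      rw [show K - (K - D) = D by omega] at hres
      rw [hlam]
      exact hres
end

section
/- Let L be the (K,D) AIR matrix with D ≥ ⌈K/2⌉ (so β₀=0 and λ₁=K−D). Then for every k ∈ [K−D, K−1], the broadcast symbol c_{k mod (K−D)} generated by column k mod (K−D) of L contains x_k and contains no symbol from the set {x_{k−(K−D)+1}, ..., x_{k−1}}; consequently receiver R_k, which knows {x_{k+1},...,x_{k+D}} (indices mod K), can decode x_k from the single symbol c_{k mod (K−D)}. -/
lemma airEntry_top {K n j k : ℕ} (hn : ¬(n = 0 ∨ K ≤ n)) (hj : j < K - K % n) :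
    airEntry K n j k = decide (j % n = k % n) := by
  rw [airEntry, dif_neg hn, if_pos hj]

lemma airEntry_bot {K n j k : ℕ} (hn : ¬(n = 0 ∨ K ≤ n)) (hm : 0 < K % n)
    (hj : ¬ j < K - K % n) (hk : k < K % n) :
    airEntry K n j k = decide (k % (K % n) = j - (K - K % n)) := by
  have hn' := hn
  push_neg at hn'
  have hn0 : 0 < n := Nat.pos_of_ne_zero hn'.1
  have hmn : K % n < n := Nat.mod_lt K hn0
  have hd : (K % n) * (n / (K % n)) + n % (K % n) = n := Nat.div_add_mod n (K % n)
  have hdiv : 1 ≤ n / (K % n) := (Nat.one_le_div_iff hm).mpr (le_of_lt hmn)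
  have h1 : (K % n) * 1 ≤ (K % n) * (n / (K % n)) := Nat.mul_le_mul_left _ hdiv
  have hlt : k < n - n % (K % n) := by
    have hmm : n % (K % n) < K % n := Nat.mod_lt n hm
    omega
  rw [airEntry, dif_neg hn, if_neg hj, if_pos hlt]

lemma mod_eq_sub {j k n : ℕ} (hn : 0 < n) (hjk : j < k) (h : j % n = k % n) :
    n ≤ k - j := by
  have hd : n ∣ k - j := (Nat.modEq_iff_dvd' (le_of_lt hjk)).mp h
  exact Nat.le_of_dvd (by omega) hd

/-- Case (iv) of Theorem 2, D ≥ ⌈K/2⌉: for k ∈ [K−D, K−1], column k mod (K−D) of the AIR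
matrix contains x_k, contains no symbol from {x_{k−(K−D)+1},…,x_{k−1}}, and every other
symbol it contains lies in the side-information window {x_{k+1},…,x_{k+D}} (mod K). -/
theorem stmt15 (K D : ℕ) (hD : 0 < D) (hDK : D < K) (hhalf : (K + 1) / 2 ≤ D) :
    ∀ k, K - D ≤ k → k < K →
      airEntry K (K - D) k (k % (K - D)) = true ∧
      (∀ j, k - (K - D) < j → j < k → airEntry K (K - D) j (k % (K - D)) = false) ∧
      (∀ j < K, airEntry K (K - D) j (k % (K - D)) = true → j ≠ k →
        1 ≤ (j + K - k) % K ∧ (j + K - k) % K ≤ D) := by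
  intro k hk1 hk2
  set n := K - D with hn
  have hn0 : 0 < n := by omega
  have hnK : n < K := by omega
  have hnot : ¬(n = 0 ∨ K ≤ n) := by omega
  have hmn : K % n < n := Nat.mod_lt K hn0
  have hcn : k % n < n := Nat.mod_lt k hn0
  have hd : n * (K / n) + K % n = K := Nat.div_add_mod K n
  set q := K / n with hq
  set m := K % n with hm
  set Q := n * q with hQ
  -- characterization of k % n in the bottom case
  have hc : K - m ≤ k → k % n = k - (K - m) := by
    intro hbot
    have hke : k = n * q + (k - (K - m)) := by omega
    calc k % n = (n * q + (k - (K - m))) % n := by rw [← hke]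
      _ = (k - (K - m)) % n := Nat.mul_add_mod n q _
      _ = k - (K - m) := Nat.mod_eq_of_lt (by omega)
  -- key sublemma: any 1 strictly above row k in column k % n is at least n above
  have hSub : ∀ j, j < k → airEntry K n j (k % n) = true → n ≤ k - j := by
    intro j hjk htrue
    by_cases hktop : k < K - m
    · rw [airEntry_top hnot (by omega)] at htrue
      exact mod_eq_sub hn0 hjk (by simpa using htrue)
    · push_neg at hktop
      have hm0 : 0 < m := by omega
      have hck := hc hktop
      by_cases hjtop : j < K - m
      · rw [airEntry_top hnot hjtop] at htrue
        exact mod_eq_sub hn0 hjk (by simpa using htrue)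
      · rw [airEntry_bot hnot hm0 hjtop (by omega)] at htrue
        have : (k % n) % m = j - (K - m) := by simpa using htrue
        rw [hck, Nat.mod_eq_of_lt (by omega)] at this
        omega
  refine ⟨?_, ?_, ?_⟩
  · -- the diagonal entry
    by_cases hktop : k < K - m
    · rw [airEntry_top hnot hktop]
      simp [Nat.mod_mod_of_dvd, Nat.mod_eq_of_lt hcn]
    · push_neg at hktop
      have hm0 : 0 < m := by omega
      have hck := hc hktop
      rw [airEntry_bot hnot hm0 (by omega) (by omega)]
      simp [hck, ← hm, Nat.mod_eq_of_lt (show k - (K - m) < m by omega)]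
  · -- no entries strictly between k - n and k
    intro j hj1 hj2
    cases hE : airEntry K n j (k % n) with
    | false => rfl
    | true => exact absurd (hSub j hj2 hE) (by omega)
  · -- every other 1 lies in the window
    intro j hjK htrue hjk
    rcases lt_trichotomy j k with h | h | h
    · have hge := hSub j h htrue
      rw [Nat.mod_eq_of_lt (show j + K - k < K by omega)]
      omega
    · exact absurd h hjk
    · rw [show j + K - k = K + (j - k) by omega, Nat.add_mod_left,
        Nat.mod_eq_of_lt (by omega)]
      omega
end
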